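/- Let J, K ⊆ I and u, v ∈ Hom(−, a) such that the left cosets u W_J(C) and v W_K(C) have non-empty intersection. Then u W_J(C) ∩ v W_K(C) = w W_{J∩K}(C) for some w ∈ Hom(−, a). In particular if J ⊆ K then this intersection equals u W_J(C), and if J = K then u W_J(C) = v W_J(C). -/

import Mathlib

set_option linter.unusedSectionVars false

/-- A Cartan scheme `C = C(I, A, (ρ_i), (C^a))`. -/
structure CartanScheme (I A : Type) [Fintype I] [DecidableEq I] [Fintype A] [Nonempty A] where
  ρ : I → A → A
  c : A → I → I → ℤ
  ρ_invol : ∀ i a, ρ i (ρ i a) = a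
  c_diag : ∀ a i, c a i i = 2
  c_offdiag_nonpos : ∀ a i j, i ≠ j → c a i j ≤ 0
  c_zero_symm : ∀ a i j, c a i j = 0 → c a j i = 0
  c_rho : ∀ a i j, c (ρ i a) i j = c a i j

namespace CartanScheme

variable {I A : Type} [Fintype I] [DecidableEq I] [Fintype A] [Nonempty A] [DecidableEq A]
variable (C : CartanScheme I A)

/-- The simple reflection `σ_i^a` as a map `ℤ^I → ℤ^I`, `σ_i^a(α_j) = α_j - c^a_{ij} α_i`. -/
def sigma (a : A) (i : I) : (I → ℤ) → (I → ℤ) :=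
  fun v k => v k - (if k = i then ∑ j, C.c a i j * v j else 0)

/-- Target object of the word `[i_1, …, i_k]` read at source object `a`:
`ρ_{i_1} ⋯ ρ_{i_k}(a)`. -/
def wordTarget (a : A) : List I → A
  | [] => a
  | i :: l => C.ρ i (wordTarget a l)

/-- The map `σ_{i_1} ⋯ σ_{i_k}^a : ℤ^I → ℤ^I` determined by a word with source `a`. -/
def wordMap (a : A) : List I → ((I → ℤ) → (I → ℤ))
  | [] => id
  | i :: l => C.sigma (C.wordTarget a l) i ∘ wordMap a l

theorem wordTarget_append (a : A) (l₁ l₂ : List I) :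
    C.wordTarget a (l₁ ++ l₂) = C.wordTarget (C.wordTarget a l₂) l₁ := by
  induction l₁ with
  | nil => rfl
  | cons i l ih => simp [wordTarget, ih]

theorem wordMap_append (a : A) (l₁ l₂ : List I) :
    C.wordMap a (l₁ ++ l₂) = C.wordMap (C.wordTarget a l₂) l₁ ∘ C.wordMap a l₂ := by
  induction l₁ with
  | nil => rfl
  | cons i l ih => simp [wordMap, ih, wordTarget_append, Function.comp_assoc]

/-- A morphism of the Weyl groupoid `W(C)`: a source object, a target object, and a map
`ℤ^I → ℤ^I` which is a composition of simple reflections along some word. -/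
@[ext]
structure Mor where
  src : A
  tgt : A
  toFun : (I → ℤ) → (I → ℤ)
  spec : ∃ l : List I, C.wordTarget src l = tgt ∧ C.wordMap src l = toFun

variable {C}

/-- A word realizes a morphism. -/
def Realizes (w : Mor C) (l : List I) : Prop :=
  C.wordTarget w.src l = w.tgt ∧ C.wordMap w.src l = w.toFun

variable (C)

/-- The identity morphism `id^a`. -/
def idMor (a : A) : Mor C := ⟨a, a, id, ⟨[], rfl, rfl⟩⟩

/-- The generator `σ_i^a ∈ Hom(a, ρ_i(a))`. -/
def genMor (i : I) (a : A) : Mor C :=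
  ⟨a, C.ρ i a, C.sigma a i, ⟨[i], rfl, Function.comp_id _⟩⟩

/-- The simple reflection with target `a`, i.e. `id^a σ_i = σ_i^{ρ_i(a)} ∈ Hom(ρ_i(a), a)`. -/
def sgen (a : A) (i : I) : Mor C :=
  { src := C.ρ i a, tgt := a, toFun := C.sigma (C.ρ i a) i,
    spec := ⟨[i], by simp [wordTarget, C.ρ_invol], Function.comp_id _⟩ }

variable {C}

/-- Composition `u ∘ v` (with `v` applied first); junk value `u` if not composable. -/
def Mor.comp (u v : Mor C) : Mor C :=
  if h : v.tgt = u.src then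
    { src := v.src, tgt := u.tgt, toFun := u.toFun ∘ v.toFun,
      spec := by
        obtain ⟨lu, hu1, hu2⟩ := u.spec
        obtain ⟨lv, hv1, hv2⟩ := v.spec
        refine ⟨lu ++ lv, ?_, ?_⟩
        · rw [C.wordTarget_append, hv1, h, hu1]
        · rw [C.wordMap_append, hv1, h, hu2, hv2] }
  else u

/-- Length of a morphism: minimal length of a realizing word. -/
noncomputable def len (w : Mor C) : ℕ := sInf {k | ∃ l : List I, Realizes w l ∧ l.length = k}

/-- A reduced decomposition. -/
def IsReduced (w : Mor C) (l : List I) : Prop := Realizes w l ∧ l.length = len w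

/-- The (right) weak order: `u ≤_R uv` iff `ℓ(uv) = ℓ(u) + ℓ(v)`. -/
def weakLe (u w : Mor C) : Prop :=
  ∃ v : Mor C, v.tgt = u.src ∧ w = u.comp v ∧ len w = len u + len v

/-- Membership in the parabolic subgroupoid `W_J(C)`. -/
def InParabolic (J : Set I) (w : Mor C) : Prop :=
  ∃ l : List I, (∀ i ∈ l, i ∈ J) ∧ Realizes w l

/-- Length with respect to the generators `σ_j`, `j ∈ J`. -/
noncomputable def lenPar (J : Set I) (w : Mor C) : ℕ :=
  sInf {k | ∃ l : List I, (∀ i ∈ l, i ∈ J) ∧ Realizes w l ∧ l.length = k}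

/-- The set of letters occurring in some reduced decomposition of `w`;
by the theorem on reduced decompositions this is the set `J(w)`. -/
def Jset (w : Mor C) : Set I := {i | ∃ l : List I, IsReduced w l ∧ i ∈ l}

variable (C)

/-- The set of real roots at the object `a`. -/
def roots (a : A) : Set (I → ℤ) :=
  {α | ∃ (b : A) (l : List I) (j : I),
    C.wordTarget b l = a ∧ α = C.wordMap b l (Pi.single j 1)}

/-- The set of positive (real) roots at `a`. -/
def posRoots (a : A) : Set (I → ℤ) := {α ∈ C.roots a | ∀ i, 0 ≤ α i}

/-- `R^re(C)` is a finite root system of type `C`: axioms (R1), (R2), (R4) and finiteness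
((R3) holds automatically for real roots). -/
def IsFRS : Prop :=
  (∀ a : A, (C.roots a).Finite) ∧
  (∀ (a : A) (α : I → ℤ), α ∈ C.roots a → (∀ i, 0 ≤ α i) ∨ (∀ i, α i ≤ 0)) ∧
  (∀ (a : A) (i : I) (α : I → ℤ), α ∈ C.roots a → (∃ z : ℤ, α = z • Pi.single i 1) →
    α = Pi.single i 1 ∨ α = -Pi.single i 1) ∧
  (∀ (a : A) (i j : I), i ≠ j →
    (fun x => C.ρ i (C.ρ j x))^[(C.roots a ∩
      {α | ∃ m n : ℕ, α = (m : ℤ) • Pi.single i 1 + (n : ℤ) • Pi.single j 1}).ncard] a = a)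

variable {C}

/-- `I_L(w)`: the set of simple reflections with target `w.tgt` below `w` in weak order. -/
def IL (w : Mor C) : Set I := {i | weakLe (sgen C w.tgt i) w}

/-- `m` is the longest element of `Hom(-,a) ∩ W_J(C)`, i.e. `w_J` at the object `a`. -/
def IsLongestPar (a : A) (J : Set I) (m : Mor C) : Prop :=
  m.tgt = a ∧ InParabolic J m ∧
    ∀ x : Mor C, x.tgt = a → InParabolic J x → weakLe x m

/-- `m` is the longest element `w_I` of `Hom(-,a)`. -/
def IsLongestAt (a : A) (m : Mor C) : Prop :=
  m.tgt = a ∧ ∀ x : Mor C, x.tgt = a → weakLe x m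

/-- `z` is the meet of `x` and `y` in `(Hom(-,a), ≤_R)`. -/
def IsMeet (a : A) (x y z : Mor C) : Prop :=
  z.tgt = a ∧ weakLe z x ∧ weakLe z y ∧
    ∀ t : Mor C, t.tgt = a → weakLe t x → weakLe t y → weakLe t z

/-- `z` is the join of `x` and `y` in `(Hom(-,a), ≤_R)`. -/
def IsJoin (a : A) (x y z : Mor C) : Prop :=
  z.tgt = a ∧ weakLe x z ∧ weakLe y z ∧
    ∀ t : Mor C, t.tgt = a → weakLe x t → weakLe y t → weakLe z t

/-- The left coset `u W_J(C) ⊆ Hom(-, u.tgt)`. -/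
def leftCoset (u : Mor C) (J : Set I) : Set (Mor C) :=
  {x | ∃ v : Mor C, InParabolic J v ∧ v.tgt = u.src ∧ x = u.comp v}

end CartanScheme

namespace CartanScheme

variable {I A : Type} [Fintype I] [DecidableEq I] [Fintype A] [Nonempty A] [DecidableEq A]
variable {C : CartanScheme I A}

/-! ### Basic facts about `sigma` -/

lemma sigma_apply (a : A) (i : I) (v : I → ℤ) (k : I) :
    C.sigma a i v k = v k - (if k = i then ∑ j, C.c a i j * v j else 0) := rfl

lemma sigma_apply_ne {k i : I} (h : k ≠ i) (a : A) (v : I → ℤ) :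
    C.sigma a i v k = v k := by simp [sigma_apply, h]

lemma sigma_rho (a : A) (i : I) : C.sigma (C.ρ i a) i = C.sigma a i := by
  funext v k
  simp [sigma_apply, C.c_rho]

lemma sigma_invol (a : A) (i : I) (v : I → ℤ) : C.sigma a i (C.sigma a i v) = v := by
  funext k
  by_cases h : k = i
  · subst h
    have key : ∑ j, C.c a k j * C.sigma a k v j = -(∑ j, C.c a k j * v j) := by
      have hterm : ∀ j, C.c a k j * C.sigma a k v j
          = C.c a k j * v j - (if j = k then C.c a k k * ∑ m, C.c a k m * v m else 0) := by
        intro j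
        by_cases hj : j = k
        · subst hj; simp [sigma_apply, mul_sub]
        · simp [sigma_apply, hj]
      rw [Finset.sum_congr rfl fun j _ => hterm j, Finset.sum_sub_distrib,
        Finset.sum_ite_eq' Finset.univ k
          (fun _ => C.c a k k * ∑ m, C.c a k m * v m)]
      simp only [Finset.mem_univ, if_pos, C.c_diag]
      ring
    show C.sigma a k (C.sigma a k v) k = v k
    rw [sigma_apply a k (C.sigma a k v) k, if_pos rfl, key, sigma_apply a k v k, if_pos rfl]
    ring
  · simp [sigma_apply, h]

lemma sigma_add (a : A) (i : I) (x y : I → ℤ) :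
    C.sigma a i (x + y) = C.sigma a i x + C.sigma a i y := by
  funext k
  by_cases h : k = i <;>
    simp [sigma_apply, h, mul_add, Finset.sum_add_distrib] <;> ring

lemma sigma_smul (a : A) (i : I) (z : ℤ) (x : I → ℤ) :
    C.sigma a i (z • x) = z • C.sigma a i x := by
  funext k
  by_cases h : k = i <;>
    simp [sigma_apply, h, Finset.mul_sum, mul_sub, mul_left_comm]

lemma csum_single (a : A) (i k : I) : (∑ j, C.c a i j * (Pi.single k 1 : I → ℤ) j) = C.c a i k := by
  rw [Finset.sum_congr rfl (fun j _ => ?_)]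
  · rw [Finset.sum_ite_eq' Finset.univ k (fun j => C.c a i j)]
    simp
  · simp [Pi.single_apply, mul_ite]

lemma sigma_single_self (a : A) (i : I) :
    C.sigma a i (Pi.single i 1 : I → ℤ) = -Pi.single i 1 := by
  funext k
  by_cases h : k = i
  · subst h; simp [sigma_apply, csum_single, C.c_diag, Pi.single_apply]
  · simp [sigma_apply, h, Pi.single_apply, h]

/-! ### Linearity of word maps -/

lemma wordMap_add (a : A) (l : List I) (x y : I → ℤ) :
    C.wordMap a l (x + y) = C.wordMap a l x + C.wordMap a l y := by
  induction l with
  | nil => rfl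
  | cons i m ih => simp [wordMap, ih, sigma_add]

lemma wordMap_smul (a : A) (l : List I) (z : ℤ) (x : I → ℤ) :
    C.wordMap a l (z • x) = z • C.wordMap a l x := by
  induction l with
  | nil => rfl
  | cons i m ih =>
      show C.sigma (C.wordTarget a m) i (C.wordMap a m (z • x))
        = z • C.sigma (C.wordTarget a m) i (C.wordMap a m x)
      rw [ih, sigma_smul]

lemma wordMap_zero (a : A) (l : List I) : C.wordMap a l 0 = 0 := by
  have := wordMap_smul (C := C) a l 0 0
  simpa using this

lemma wordMap_neg (a : A) (l : List I) (x : I → ℤ) :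
    C.wordMap a l (-x) = -C.wordMap a l x := by
  have := wordMap_smul (C := C) a l (-1) x
  simpa using this

lemma wordMap_coord {J : Set I} {l : List I} (hl : ∀ i ∈ l, i ∈ J)
    (a : A) (v : I → ℤ) {k : I} (hk : k ∉ J) :
    C.wordMap a l v k = v k := by
  induction l with
  | nil => rfl
  | cons i m ih =>
      have hi : i ∈ J := hl i (by simp)
      have hki : k ≠ i := fun h => hk (h ▸ hi)
      simp only [wordMap, Function.comp_apply, sigma_apply_ne hki]
      exact ih (fun j hj => hl j (by simp [hj]))

/-! ### Reversal and inverses -/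

lemma wordTarget_rev (a : A) (l : List I) :
    C.wordTarget (C.wordTarget a l) l.reverse = a := by
  induction l with
  | nil => rfl
  | cons i m ih =>
      have h1 : C.wordTarget a (i :: m) = C.ρ i (C.wordTarget a m) := rfl
      rw [List.reverse_cons, wordTarget_append, h1]
      have : C.wordTarget (C.ρ i (C.wordTarget a m)) [i] = C.wordTarget a m := by
        simp [wordTarget, C.ρ_invol]
      rw [this, ih]

lemma wordMap_rev (a : A) (l : List I) (v : I → ℤ) :
    C.wordMap (C.wordTarget a l) l.reverse (C.wordMap a l v) = v := by
  induction l with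
  | nil => rfl
  | cons i m ih =>
      have h1 : C.wordTarget a (i :: m) = C.ρ i (C.wordTarget a m) := rfl
      rw [List.reverse_cons, h1, wordMap_append]
      have hsingle : C.wordTarget (C.ρ i (C.wordTarget a m)) [i] = C.wordTarget a m := by
        simp [wordTarget, C.ρ_invol]
      have hmap : C.wordMap (C.ρ i (C.wordTarget a m)) [i] = C.sigma (C.wordTarget a m) i := by
        simp [wordMap, wordTarget, sigma_rho]
      simp only [hsingle, hmap, Function.comp_apply]
      have : C.wordMap a (i :: m) v = C.sigma (C.wordTarget a m) i (C.wordMap a m v) := rfl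
      rw [this, sigma_invol]
      exact ih

lemma wordMap_rev' (a : A) (l : List I) (v : I → ℤ) :
    C.wordMap a l (C.wordMap (C.wordTarget a l) l.reverse v) = v := by
  have h := wordMap_rev (C := C) (C.wordTarget a l) l.reverse v
  rw [wordTarget_rev, List.reverse_reverse] at h
  exact h

/-! ### Morphism basics -/

lemma Mor.exists_realizes (w : Mor C) : ∃ l, Realizes w l := by
  obtain ⟨l, h1, h2⟩ := w.spec
  exact ⟨l, h1, h2⟩

noncomputable def Mor.inv (w : Mor C) : Mor C :=
  { src := w.tgt, tgt := w.src,
    toFun := C.wordMap w.tgt (Classical.choose w.spec).reverse,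
    spec := ⟨(Classical.choose w.spec).reverse, by
      have h := wordTarget_rev (C := C) w.src (Classical.choose w.spec)
      rw [(Classical.choose_spec w.spec).1] at h
      exact h, rfl⟩ }

@[simp] lemma Mor.inv_src (w : Mor C) : w.inv.src = w.tgt := rfl
@[simp] lemma Mor.inv_tgt (w : Mor C) : w.inv.tgt = w.src := rfl

lemma Mor.inv_apply_apply (w : Mor C) (v : I → ℤ) : w.inv.toFun (w.toFun v) = v := by
  show C.wordMap w.tgt (Classical.choose w.spec).reverse (w.toFun v) = v
  have h := wordMap_rev (C := C) w.src (Classical.choose w.spec) v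
  rw [(Classical.choose_spec w.spec).1, (Classical.choose_spec w.spec).2] at h
  exact h

lemma Mor.apply_inv_apply (w : Mor C) (v : I → ℤ) : w.toFun (w.inv.toFun v) = v := by
  show w.toFun (C.wordMap w.tgt (Classical.choose w.spec).reverse v) = v
  have h := wordMap_rev' (C := C) w.src (Classical.choose w.spec) v
  rw [(Classical.choose_spec w.spec).1, (Classical.choose_spec w.spec).2] at h
  exact h

lemma Mor.toFun_injective (w : Mor C) : Function.Injective w.toFun := by
  intro x y h
  have := congrArg w.inv.toFun h
  rwa [Mor.inv_apply_apply, Mor.inv_apply_apply] at this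

lemma Mor.inv_eq_iff (w : Mor C) {x y : I → ℤ} : w.inv.toFun x = y ↔ x = w.toFun y := by
  constructor
  · rintro rfl; rw [Mor.apply_inv_apply]
  · rintro rfl; rw [Mor.inv_apply_apply]

lemma Mor.toFun_add (w : Mor C) (x y : I → ℤ) :
    w.toFun (x + y) = w.toFun x + w.toFun y := by
  obtain ⟨l, h1, h2⟩ := w.spec
  rw [← h2]; exact wordMap_add _ _ _ _

lemma Mor.toFun_smul (w : Mor C) (z : ℤ) (x : I → ℤ) :
    w.toFun (z • x) = z • w.toFun x := by
  obtain ⟨l, h1, h2⟩ := w.spec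
  rw [← h2]; exact wordMap_smul _ _ _ _

lemma Mor.toFun_zero (w : Mor C) : w.toFun 0 = 0 := by
  have := w.toFun_smul 0 0; simpa using this

lemma Mor.toFun_neg (w : Mor C) (x : I → ℤ) : w.toFun (-x) = -w.toFun x := by
  have := w.toFun_smul (-1) x; simpa using this

lemma Mor.realizes_inv {w : Mor C} {l : List I} (h : Realizes w l) :
    Realizes w.inv l.reverse := by
  obtain ⟨h1, h2⟩ := h
  refine ⟨?_, ?_⟩
  · show C.wordTarget w.tgt l.reverse = w.src
    rw [← h1, wordTarget_rev]
  · show C.wordMap w.tgt l.reverse = w.inv.toFun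
    funext v
    apply w.toFun_injective
    rw [Mor.apply_inv_apply]
    have h := wordMap_rev' (C := C) w.src l v
    rw [h1, h2] at h
    exact h

/-! ### Composition -/

lemma comp_src {u v : Mor C} (h : v.tgt = u.src) : (u.comp v).src = v.src := by
  simp [Mor.comp, h]

lemma comp_tgt {u v : Mor C} (h : v.tgt = u.src) : (u.comp v).tgt = u.tgt := by
  simp [Mor.comp, h]

lemma comp_toFun {u v : Mor C} (h : v.tgt = u.src) :
    (u.comp v).toFun = u.toFun ∘ v.toFun := by
  simp [Mor.comp, h]

lemma realizes_comp {u v : Mor C} {lu lv : List I} (h : v.tgt = u.src)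
    (hu : Realizes u lu) (hv : Realizes v lv) : Realizes (u.comp v) (lu ++ lv) := by
  obtain ⟨hu1, hu2⟩ := hu
  obtain ⟨hv1, hv2⟩ := hv
  refine ⟨?_, ?_⟩
  · rw [comp_src h, wordTarget_append, hv1, h, hu1, comp_tgt h]
  · rw [comp_src h, wordMap_append, hv1, h, hu2, hv2, comp_toFun h]

lemma comp_assoc {x y z : Mor C} (h1 : y.tgt = x.src) (h2 : z.tgt = y.src) :
    (x.comp y).comp z = x.comp (y.comp z) := by
  have h3 : z.tgt = (x.comp y).src := by rw [comp_src h1]; exact h2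
  have h4 : (y.comp z).tgt = x.src := by rw [comp_tgt h2]; exact h1
  ext1
  · rw [comp_src h3, comp_src h4, comp_src h2]
  · rw [comp_tgt h3, comp_tgt h4, comp_tgt h1]
  · rw [comp_toFun h3, comp_toFun h4, comp_toFun h1, comp_toFun h2]
    rfl

lemma idMor_comp {r : Mor C} {x : A} (h : r.tgt = x) : (idMor C x).comp r = r := by
  have h' : r.tgt = (idMor C x).src := h
  ext1
  · rw [comp_src h']
  · rw [comp_tgt h']; exact h.symm
  · rw [comp_toFun h']; rfl

lemma comp_inv (w : Mor C) : w.comp w.inv = idMor C w.tgt := by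
  have h : w.inv.tgt = w.src := rfl
  ext1
  · rw [comp_src h]; rfl
  · rw [comp_tgt h]; rfl
  · rw [comp_toFun h]; funext v; exact w.apply_inv_apply v

lemma inv_comp (w : Mor C) : w.inv.comp w = idMor C w.src := by
  have h : w.tgt = w.inv.src := rfl
  ext1
  · rw [comp_src h]; rfl
  · rw [comp_tgt h]; rfl
  · rw [comp_toFun h]; funext v; exact w.inv_apply_apply v

lemma realizes_sgen (a : A) (i : I) : Realizes (sgen C a i) [i] := by
  refine ⟨?_, ?_⟩
  · show C.wordTarget (C.ρ i a) [i] = a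
    simp [wordTarget, C.ρ_invol]
  · show C.wordMap (C.ρ i a) [i] = C.sigma (C.ρ i a) i
    simp [wordMap, wordTarget]

lemma realizes_genMor (i : I) (a : A) : Realizes (genMor C i a) [i] := by
  refine ⟨rfl, ?_⟩
  · show C.wordMap a [i] = C.sigma a i
    simp [wordMap, wordTarget]

lemma realizes_idMor (a : A) : Realizes (idMor C a) [] := ⟨rfl, rfl⟩

/-! ### Positivity, roots -/

def IsPosV (α : I → ℤ) : Prop := ∀ i, 0 ≤ α i

def IsNegV (α : I → ℤ) : Prop := ∀ i, α i ≤ 0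

lemma pos_neg_zero {α : I → ℤ} (hp : IsPosV α) (hn : IsNegV α) : α = 0 := by
  funext k; exact le_antisymm (hn k) (hp k)

lemma isNegV_neg_iff {α : I → ℤ} : IsNegV (-α) ↔ IsPosV α := by
  constructor
  · intro h i; have := h i; simp only [Pi.neg_apply] at this; omega
  · intro h i; simp only [Pi.neg_apply]; have := h i; omega

lemma isPosV_neg_iff {α : I → ℤ} : IsPosV (-α) ↔ IsNegV α := by
  constructor
  · intro h i; have := h i; simp only [Pi.neg_apply] at this; omega
  · intro h i; simp only [Pi.neg_apply]; have := h i; omega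

lemma isPosV_single (i : I) : IsPosV (Pi.single i 1 : I → ℤ) := by
  intro k
  rcases eq_or_ne k i with rfl | h
  · simp [Pi.single_apply]
  · simp [Pi.single_apply, h]

lemma not_isNegV_single (i : I) : ¬ IsNegV (Pi.single i 1 : I → ℤ) := by
  intro h; have := h i; simp [Pi.single_apply] at this

lemma single_ne_zero' (i : I) : (Pi.single i 1 : I → ℤ) ≠ 0 := by
  intro h
  have := congrFun h i
  simp [Pi.single_apply] at this

lemma single_eq_smul (k : I) (z : ℤ) : (Pi.single k z : I → ℤ) = z • Pi.single k 1 := by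
  funext m
  rcases eq_or_ne m k with rfl | h
  · simp [Pi.single_apply]
  · simp [Pi.single_apply, h]

lemma single_mem_roots (a : A) (j : I) : (Pi.single j 1 : I → ℤ) ∈ C.roots a :=
  ⟨a, [], j, rfl, rfl⟩

lemma roots_map (w : Mor C) {α : I → ℤ} (h : α ∈ C.roots w.src) :
    w.toFun α ∈ C.roots w.tgt := by
  obtain ⟨b, l, j, h1, h2⟩ := h
  obtain ⟨lw, hw1, hw2⟩ := w.spec
  refine ⟨b, lw ++ l, j, ?_, ?_⟩
  · rw [wordTarget_append, h1, hw1]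
  · rw [wordMap_append, h1, hw2, h2]; rfl

lemma roots_ne_zero {a : A} {α : I → ℤ} (h : α ∈ C.roots a) : α ≠ 0 := by
  obtain ⟨b, l, j, h1, h2⟩ := h
  intro h0
  apply single_ne_zero' j
  have := wordMap_rev (C := C) b l (Pi.single j 1)
  rw [← h2, h0, wordMap_zero] at this
  exact this.symm

lemma neg_mem_roots {a : A} {α : I → ℤ} (h : α ∈ C.roots a) : -α ∈ C.roots a := by
  obtain ⟨b, l, j, h1, h2⟩ := h
  refine ⟨C.ρ j b, l ++ [j], j, ?_, ?_⟩
  · rw [wordTarget_append]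
    have : C.wordTarget (C.ρ j b) [j] = b := by simp [wordTarget, C.ρ_invol]
    rw [this, h1]
  · rw [wordMap_append]
    have ht : C.wordTarget (C.ρ j b) [j] = b := by simp [wordTarget, C.ρ_invol]
    have hm : C.wordMap (C.ρ j b) [j] (Pi.single j 1) = -Pi.single j 1 := by
      show C.sigma (C.wordTarget (C.ρ j b) []) j (Pi.single j 1) = _
      show C.sigma (C.ρ j b) j (Pi.single j 1) = _
      rw [sigma_single_self]
    rw [Function.comp_apply, ht, hm, wordMap_neg, h2]

lemma root_pos_or_neg (hC : C.IsFRS) {a : A} {α : I → ℤ} (h : α ∈ C.roots a) :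
    IsPosV α ∨ IsNegV α := hC.2.1 a α h

lemma pos_of_not_neg (hC : C.IsFRS) {a : A} {α : I → ℤ} (h : α ∈ C.roots a)
    (hn : ¬ IsNegV α) : IsPosV α := (root_pos_or_neg hC h).resolve_right hn

lemma neg_of_not_pos (hC : C.IsFRS) {a : A} {α : I → ℤ} (h : α ∈ C.roots a)
    (hn : ¬ IsPosV α) : IsNegV α := (root_pos_or_neg hC h).resolve_left hn

lemma not_neg_of_pos {a : A} {α : I → ℤ} (h : α ∈ C.roots a) (hp : IsPosV α) :
    ¬ IsNegV α := fun hn => roots_ne_zero h (pos_neg_zero hp hn)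

lemma not_pos_of_neg {a : A} {α : I → ℤ} (h : α ∈ C.roots a) (hn : IsNegV α) :
    ¬ IsPosV α := fun hp => roots_ne_zero h (pos_neg_zero hp hn)

/-- Lemma B: `σ_i` maps positive roots other than `α_i` to positive roots. -/
lemma sigma_pos (hC : C.IsFRS) {a : A} {i : I} {α : I → ℤ} (hα : α ∈ C.roots a)
    (hpos : IsPosV α) (hne : α ≠ Pi.single i 1) : IsPosV (C.sigma a i α) := by
  have hroot : C.sigma a i α ∈ C.roots (C.ρ i a) := roots_map (genMor C i a) hα
  by_cases hsupp : ∀ k, k ≠ i → α k = 0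
  · exfalso
    have hz : α = (α i) • Pi.single i 1 := by
      funext k
      rcases eq_or_ne k i with rfl | h
      · simp [Pi.single_apply]
      · simp [Pi.single_apply, h, hsupp k h]
    rcases hC.2.2.1 a i α hα ⟨α i, hz⟩ with h1 | h1
    · exact hne h1
    · have := hpos i
      rw [h1] at this
      simp [Pi.single_apply] at this
  · push_neg at hsupp
    obtain ⟨k, hki, hk0⟩ := hsupp
    have hkpos : 0 < α k := lt_of_le_of_ne (hpos k) (Ne.symm hk0)
    refine pos_of_not_neg hC hroot (fun hneg => ?_)
    have := hneg k
    rw [sigma_apply_ne hki] at this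
    omega

lemma sigma_neg_single (a : A) (j : I) :
    C.sigma a j (-Pi.single j 1) = Pi.single j 1 := by
  have := sigma_smul (C := C) a j (-1) (Pi.single j 1)
  simp only [neg_smul, one_smul] at this
  rw [this, sigma_single_self]; simp

lemma sigma_neg_iff (hC : C.IsFRS) {a : A} {j : I} {δ : I → ℤ} (hδ : δ ∈ C.roots a) :
    IsNegV (C.sigma a j δ) ↔ (δ = Pi.single j 1 ∨ (IsNegV δ ∧ δ ≠ -Pi.single j 1)) := by
  constructor
  · intro h
    by_cases h1 : δ = Pi.single j 1
    · exact Or.inl h1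
    · right
      constructor
      · by_contra hnn
        have hp : IsPosV δ := pos_of_not_neg hC hδ hnn
        have := sigma_pos hC hδ hp h1
        have hroot : C.sigma a j δ ∈ C.roots (C.ρ j a) := roots_map (genMor C j a) hδ
        exact not_neg_of_pos hroot this h
      · intro h2
        rw [h2, sigma_neg_single] at h
        exact not_isNegV_single j h
  · rintro (rfl | ⟨hn, hne⟩)
    · rw [sigma_single_self]
      exact isNegV_neg_iff.mpr (isPosV_single j)
    · have hp : IsPosV (-δ) := isPosV_neg_iff.mpr hn
      have hroot : -δ ∈ C.roots a := neg_mem_roots hδ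
      have hne' : -δ ≠ Pi.single j 1 := by
        intro h; apply hne; rw [← h]; simp
      have hh := sigma_pos hC hroot hp hne'
      have heq : C.sigma a j (-δ) = -(C.sigma a j δ) := by
        have h2 := sigma_smul (C := C) a j (-1) δ
        simpa using h2
      rw [heq] at hh
      intro k
      have := hh k
      simp only [Pi.neg_apply] at this
      omega

/-! ### Inversion sets -/

def invSet (w : Mor C) : Set (I → ℤ) :=
  {α | α ∈ C.roots w.src ∧ IsPosV α ∧ IsNegV (w.toFun α)}

noncomputable def invN (w : Mor C) : ℕ := (invSet w).ncard

lemma invSet_finite (hC : C.IsFRS) (w : Mor C) : (invSet w).Finite :=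
  (hC.1 w.src).subset (fun α hα => hα.1)

lemma mem_invSet {w : Mor C} {α : I → ℤ} :
    α ∈ invSet w ↔ α ∈ C.roots w.src ∧ IsPosV α ∧ IsNegV (w.toFun α) := Iff.rfl

lemma sigma_injective (a : A) (i : I) : Function.Injective (C.sigma a i) := by
  intro x y h
  have := congrArg (C.sigma a i) h
  rwa [sigma_invol, sigma_invol] at this

lemma comp_sgen_src (w : Mor C) (i : I) : (w.comp (sgen C w.src i)).src = C.ρ i w.src :=
  comp_src rfl

lemma comp_sgen_tgt (w : Mor C) (i : I) : (w.comp (sgen C w.src i)).tgt = w.tgt :=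
  comp_tgt rfl

lemma comp_sgen_toFun (w : Mor C) (i : I) :
    (w.comp (sgen C w.src i)).toFun = w.toFun ∘ C.sigma w.src i := by
  rw [comp_toFun rfl]
  show w.toFun ∘ C.sigma (C.ρ i w.src) i = _
  rw [sigma_rho]

lemma invSet_comp_sgen_of_not_neg (hC : C.IsFRS) (w : Mor C) (i : I)
    (hpos : ¬ IsNegV (w.toFun (Pi.single i 1))) :
    invSet (w.comp (sgen C w.src i))
      = insert (Pi.single i 1) ((C.sigma w.src i) '' invSet w) := by
  have hwpos : IsPosV (w.toFun (Pi.single i 1)) :=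
    pos_of_not_neg hC (roots_map w (single_mem_roots _ i)) hpos
  ext β
  simp only [mem_invSet, comp_sgen_src, comp_sgen_toFun, Function.comp_apply, Set.mem_insert_iff,
    Set.mem_image]
  constructor
  · rintro ⟨hroot, hp, hneg⟩
    by_cases hb : β = Pi.single i 1
    · exact Or.inl hb
    · right
      refine ⟨C.sigma w.src i β, ⟨?_, ?_, ?_⟩, sigma_invol _ _ _⟩
      · have h2 := roots_map (sgen C w.src i) (α := β) hroot
        rwa [show (sgen C w.src i).toFun = C.sigma (C.ρ i w.src) i from rfl, sigma_rho] at h2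
      · have := sigma_pos hC (a := C.ρ i w.src) hroot hp hb
        rwa [sigma_rho] at this
      · exact hneg
  · rintro (rfl | ⟨α, ⟨hroot, hp, hneg⟩, rfl⟩)
    · refine ⟨single_mem_roots _ i, isPosV_single i, ?_⟩
      rw [sigma_single_self, Mor.toFun_neg]
      exact isNegV_neg_iff.mpr hwpos
    · have hne : α ≠ Pi.single i 1 := by
        rintro rfl
        exact hpos hneg
      refine ⟨roots_map (genMor C i w.src) hroot, sigma_pos hC hroot hp hne, ?_⟩
      rw [sigma_invol]
      exact hneg

lemma invN_comp_sgen_of_not_neg (hC : C.IsFRS) (w : Mor C) (i : I)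
    (hpos : ¬ IsNegV (w.toFun (Pi.single i 1))) :
    invN (w.comp (sgen C w.src i)) = invN w + 1 := by
  rw [invN, invSet_comp_sgen_of_not_neg hC w i hpos]
  have hnm : (Pi.single i 1 : I → ℤ) ∉ (C.sigma w.src i) '' invSet w := by
    rintro ⟨α, ⟨_, hp, _⟩, hα⟩
    have hav : α = C.sigma w.src i (Pi.single i 1) := by
      rw [← hα, sigma_invol]
    rw [sigma_single_self] at hav
    have h2 := hp i
    rw [hav] at h2
    simp [Pi.single_apply] at h2
  rw [Set.ncard_insert_of_notMem hnm (((invSet_finite hC w).image _))]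
  rw [Set.ncard_image_of_injective _ (sigma_injective w.src i)]
  rfl

lemma invSet_comp_sgen_of_neg (hC : C.IsFRS) (w : Mor C) (i : I)
    (hneg : IsNegV (w.toFun (Pi.single i 1))) :
    invSet (w.comp (sgen C w.src i))
      = (C.sigma w.src i) '' (invSet w \ {Pi.single i 1}) := by
  ext β
  simp only [mem_invSet, comp_sgen_src, comp_sgen_toFun, Function.comp_apply, Set.mem_image,
    Set.mem_diff, Set.mem_singleton_iff]
  constructor
  · rintro ⟨hroot, hp, hn⟩
    have hb : β ≠ Pi.single i 1 := by
      rintro rfl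
      rw [sigma_single_self, Mor.toFun_neg] at hn
      have h0 := pos_neg_zero (isPosV_neg_iff.mpr hneg) hn
      have : w.toFun (Pi.single i 1) = 0 := by
        have := congrArg Neg.neg h0
        simpa using this
      exact roots_ne_zero (roots_map w (single_mem_roots _ i)) this
    refine ⟨C.sigma w.src i β, ⟨⟨?_, ?_, hn⟩, ?_⟩, sigma_invol _ _ _⟩
    · have h2 := roots_map (sgen C w.src i) (α := β) hroot
      rwa [show (sgen C w.src i).toFun = C.sigma (C.ρ i w.src) i from rfl, sigma_rho] at h2
    · have := sigma_pos hC (a := C.ρ i w.src) hroot hp hb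
      rwa [sigma_rho] at this
    · intro h
      have hβ : β = C.sigma w.src i (Pi.single i 1) := by rw [← h, sigma_invol]
      rw [sigma_single_self] at hβ
      have h2 := hp i
      rw [hβ] at h2
      simp [Pi.single_apply] at h2
  · rintro ⟨α, ⟨⟨hroot, hp, hn⟩, hne⟩, rfl⟩
    refine ⟨roots_map (genMor C i w.src) hroot, sigma_pos hC hroot hp hne, ?_⟩
    rw [sigma_invol]
    exact hn

lemma invN_comp_sgen_of_neg (hC : C.IsFRS) (w : Mor C) (i : I)
    (hneg : IsNegV (w.toFun (Pi.single i 1))) :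
    invN w = invN (w.comp (sgen C w.src i)) + 1 := by
  rw [invN, invN, invSet_comp_sgen_of_neg hC w i hneg]
  rw [Set.ncard_image_of_injective _ (sigma_injective w.src i)]
  have hmem : (Pi.single i 1 : I → ℤ) ∈ invSet w :=
    ⟨single_mem_roots _ i, isPosV_single i, hneg⟩
  rw [Set.ncard_diff_singleton_add_one hmem (invSet_finite hC w)]

/-! ### Left composition (peeling the outermost letter) -/

/-- The morphism realized by the tail of a word. -/
def tailMor (b : A) (m : List I) : Mor C :=
  ⟨b, C.wordTarget b m, C.wordMap b m, ⟨m, rfl, rfl⟩⟩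

lemma realizes_tailMor (b : A) (m : List I) : Realizes (tailMor (C := C) b m) m := ⟨rfl, rfl⟩

lemma genMor_comp_src (x : Mor C) (j : I) : ((genMor C j x.tgt).comp x).src = x.src :=
  comp_src rfl

lemma genMor_comp_tgt (x : Mor C) (j : I) : ((genMor C j x.tgt).comp x).tgt = C.ρ j x.tgt :=
  comp_tgt rfl

lemma genMor_comp_toFun (x : Mor C) (j : I) :
    ((genMor C j x.tgt).comp x).toFun = C.sigma x.tgt j ∘ x.toFun :=
  comp_toFun rfl

/-- Peeling: a morphism realized by `j :: m` equals `σ_j ∘ (tail)`. -/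
lemma eq_genMor_comp_tailMor {w : Mor C} {j : I} {m : List I} (h : Realizes w (j :: m)) :
    w = (genMor C j (tailMor (C := C) w.src m).tgt).comp (tailMor (C := C) w.src m) := by
  obtain ⟨h1, h2⟩ := h
  ext1
  · rw [genMor_comp_src]
    exact rfl
  · rw [genMor_comp_tgt]
    exact h1.symm
  · rw [genMor_comp_toFun]
    exact h2.symm

lemma invSet_genMor_comp_of_pos (hC : C.IsFRS) (x : Mor C) (j : I)
    (hγ : IsPosV (x.inv.toFun (Pi.single j 1))) :
    invSet ((genMor C j x.tgt).comp x) = insert (x.inv.toFun (Pi.single j 1)) (invSet x) := by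
  have hγroot : x.inv.toFun (Pi.single j 1) ∈ C.roots x.src :=
    roots_map x.inv (single_mem_roots _ j)
  ext β
  simp only [mem_invSet, genMor_comp_src, genMor_comp_toFun, Function.comp_apply,
    Set.mem_insert_iff]
  constructor
  · rintro ⟨hroot, hp, hn⟩
    have hδroot : x.toFun β ∈ C.roots x.tgt := roots_map x hroot
    rcases (sigma_neg_iff hC hδroot).mp hn with h1 | ⟨h1, h2⟩
    · left
      exact ((x.inv_eq_iff).mpr h1.symm).symm
    · right; exact ⟨hroot, hp, h1⟩
  · rintro (rfl | ⟨hroot, hp, hn⟩)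
    · refine ⟨hγroot, hγ, ?_⟩
      rw [Mor.apply_inv_apply, sigma_single_self]
      exact isNegV_neg_iff.mpr (isPosV_single j)
    · refine ⟨hroot, hp, ?_⟩
      rw [sigma_neg_iff hC (roots_map x hroot)]
      right
      refine ⟨hn, fun h2 => ?_⟩
      have hβ : β = -x.inv.toFun (Pi.single j 1) := by
        have h3 : β = x.inv.toFun (-Pi.single j 1) := ((x.inv_eq_iff).mpr h2.symm).symm
        rw [h3, Mor.toFun_neg]
      rw [hβ] at hp
      exact roots_ne_zero hγroot (pos_neg_zero hγ (isPosV_neg_iff.mp hp))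
  
lemma invN_genMor_comp_of_pos (hC : C.IsFRS) (x : Mor C) (j : I)
    (hγ : IsPosV (x.inv.toFun (Pi.single j 1))) :
    invN ((genMor C j x.tgt).comp x) = invN x + 1 := by
  rw [invN, invSet_genMor_comp_of_pos hC x j hγ]
  have hnm : x.inv.toFun (Pi.single j 1) ∉ invSet x := by
    rintro ⟨_, _, hn⟩
    rw [Mor.apply_inv_apply] at hn
    exact not_isNegV_single j hn
  rw [Set.ncard_insert_of_notMem hnm (invSet_finite hC x)]
  rfl

lemma invSet_genMor_comp_of_neg (hC : C.IsFRS) (x : Mor C) (j : I)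
    (hγ : IsNegV (x.inv.toFun (Pi.single j 1))) :
    invSet ((genMor C j x.tgt).comp x) = invSet x \ {-x.inv.toFun (Pi.single j 1)} := by
  have hγroot : x.inv.toFun (Pi.single j 1) ∈ C.roots x.src :=
    roots_map x.inv (single_mem_roots _ j)
  ext β
  simp only [mem_invSet, genMor_comp_src, genMor_comp_toFun, Function.comp_apply,
    Set.mem_diff, Set.mem_singleton_iff]
  constructor
  · rintro ⟨hroot, hp, hn⟩
    have hδroot : x.toFun β ∈ C.roots x.tgt := roots_map x hroot
    rcases (sigma_neg_iff hC hδroot).mp hn with h1 | ⟨h1, h2⟩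
    · exfalso
      have hβ : β = x.inv.toFun (Pi.single j 1) := ((x.inv_eq_iff).mpr h1.symm).symm
      rw [hβ] at hp
      exact roots_ne_zero hγroot (pos_neg_zero hp hγ)
    · refine ⟨⟨hroot, hp, h1⟩, fun hb => ?_⟩
      apply h2
      rw [hb, Mor.toFun_neg, Mor.apply_inv_apply]
  · rintro ⟨⟨hroot, hp, hn⟩, hne⟩
    refine ⟨hroot, hp, ?_⟩
    rw [sigma_neg_iff hC (roots_map x hroot)]
    right
    refine ⟨hn, fun h2 => ?_⟩
    apply hne
    have := congrArg x.inv.toFun h2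
    rw [Mor.inv_apply_apply, Mor.toFun_neg] at this
    exact this

lemma invN_genMor_comp_of_neg (hC : C.IsFRS) (x : Mor C) (j : I)
    (hγ : IsNegV (x.inv.toFun (Pi.single j 1))) :
    invN x = invN ((genMor C j x.tgt).comp x) + 1 := by
  rw [invN, invN, invSet_genMor_comp_of_neg hC x j hγ]
  have hmem : -x.inv.toFun (Pi.single j 1) ∈ invSet x := by
    refine ⟨neg_mem_roots (roots_map x.inv (single_mem_roots _ j)), isPosV_neg_iff.mpr hγ, ?_⟩
    rw [Mor.toFun_neg, Mor.apply_inv_apply]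
    exact isNegV_neg_iff.mpr (isPosV_single j)
  rw [Set.ncard_diff_singleton_add_one hmem (invSet_finite hC x)]

/-! ### Parity and bound -/

lemma invSet_of_realizes_nil {w : Mor C} (h : Realizes w []) : invSet w = ∅ := by
  ext α
  simp only [mem_invSet, Set.mem_empty_iff_false, iff_false]
  rintro ⟨hroot, hp, hn⟩
  have : w.toFun α = α := by rw [← h.2]; rfl
  rw [this] at hn
  exact roots_ne_zero hroot (pos_neg_zero hp hn)

lemma invN_of_realizes_nil {w : Mor C} (h : Realizes w []) : invN w = 0 := by
  rw [invN, invSet_of_realizes_nil h, Set.ncard_empty]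

lemma invN_parity (hC : C.IsFRS) :
    ∀ (l : List I) (w : Mor C), Realizes w l → ∃ d, l.length = invN w + 2 * d := by
  intro l
  induction l with
  | nil => exact fun w h => ⟨0, by simp [invN_of_realizes_nil h]⟩
  | cons j m ih =>
      intro w h
      set x := tailMor (C := C) w.src m with hx
      have hxr : Realizes x m := realizes_tailMor _ _
      have hwx : w = (genMor C j x.tgt).comp x := eq_genMor_comp_tailMor h
      obtain ⟨d, hd⟩ := ih x hxr
      have hγroot : x.inv.toFun (Pi.single j 1) ∈ C.roots x.src :=
        roots_map x.inv (single_mem_roots _ j)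
      rcases root_pos_or_neg hC hγroot with hγ | hγ
      · refine ⟨d, ?_⟩
        have := invN_genMor_comp_of_pos hC x j hγ
        rw [← hwx] at this
        simp only [List.length_cons, hd, this]
        ring
      · refine ⟨d + 1, ?_⟩
        have := invN_genMor_comp_of_neg hC x j hγ
        rw [← hwx] at this
        simp only [List.length_cons, hd, this]
        ring

lemma invN_le_length (hC : C.IsFRS) {l : List I} {w : Mor C} (h : Realizes w l) :
    invN w ≤ l.length := by
  obtain ⟨d, hd⟩ := invN_parity hC l w h
  omega

/-! ### Sums and descents -/

lemma Mor.toFun_sum (w : Mor C) {κ : Type} (s : Finset κ) (f : κ → I → ℤ) :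
    w.toFun (∑ k ∈ s, f k) = ∑ k ∈ s, w.toFun (f k) := by
  classical
  induction s using Finset.induction_on with
  | empty => simp [Mor.toFun_zero]
  | @insert k s hk ih => rw [Finset.sum_insert hk, Finset.sum_insert hk, Mor.toFun_add, ih]

lemma toFun_eq_sum_basis (w : Mor C) (v : I → ℤ) :
    w.toFun v = ∑ k, v k • w.toFun (Pi.single k 1) := by
  conv_lhs => rw [← Finset.univ_sum_single v]
  rw [Mor.toFun_sum]
  congr 1
  funext k
  rw [single_eq_smul, Mor.toFun_smul]

lemma exists_descent (hC : C.IsFRS) {w : Mor C} (h : invN w ≠ 0) :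
    ∃ i, IsNegV (w.toFun (Pi.single i 1)) := by
  by_contra hall
  push_neg at hall
  have hpos : ∀ i, IsPosV (w.toFun (Pi.single i 1)) := fun i =>
    pos_of_not_neg hC (roots_map w (single_mem_roots _ i)) (hall i)
  obtain ⟨β, hβ⟩ := Set.nonempty_of_ncard_ne_zero h
  obtain ⟨hroot, hp, hn⟩ := hβ
  have hwβpos : IsPosV (w.toFun β) := by
    rw [toFun_eq_sum_basis]
    intro l
    rw [Finset.sum_apply]
    refine Finset.sum_nonneg (fun k _ => ?_)
    have h1 := hp k
    have h2 := hpos k l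
    simp only [Pi.smul_apply, smul_eq_mul]
    positivity
  exact roots_ne_zero (roots_map w hroot) (pos_neg_zero hwβpos hn)

/-! ### Rank-two cones -/

def coneSet (C : CartanScheme I A) (i j : I) (a : A) : Set (I → ℤ) :=
  C.roots a ∩ {α | ∃ m n : ℕ, α = (m : ℤ) • Pi.single i 1 + (n : ℤ) • Pi.single j 1}

lemma coneSet_comm (i j : I) (a : A) : coneSet C i j a = coneSet C j i a := by
  unfold coneSet
  congr 1
  ext α
  constructor
  · rintro ⟨m, n, rfl⟩; exact ⟨n, m, by rw [add_comm]⟩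
  · rintro ⟨m, n, rfl⟩; exact ⟨n, m, by rw [add_comm]⟩

lemma coneSet_subset_roots (i j : I) (a : A) : coneSet C i j a ⊆ C.roots a :=
  fun _ h => h.1

lemma coneSet_finite (hC : C.IsFRS) (i j : I) (a : A) : (coneSet C i j a).Finite :=
  (hC.1 a).subset (coneSet_subset_roots i j a)

lemma cone_pos {i j : I} {a : A} {α : I → ℤ} (h : α ∈ coneSet C i j a) : IsPosV α := by
  obtain ⟨-, m, n, rfl⟩ := h
  intro k
  have hm : (0:ℤ) ≤ (m:ℤ) := Int.ofNat_nonneg m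
  have hn : (0:ℤ) ≤ (n:ℤ) := Int.ofNat_nonneg n
  simp only [Pi.add_apply, Pi.smul_apply, smul_eq_mul, Pi.single_apply]
  split_ifs <;> nlinarith

lemma cone_supp {i j : I} {a : A} {α : I → ℤ} (h : α ∈ coneSet C i j a) :
    ∀ k, k ≠ i → k ≠ j → α k = 0 := by
  obtain ⟨-, m, n, rfl⟩ := h
  intro k hki hkj
  simp [Pi.single_apply, Pi.add_apply, Pi.smul_apply, hki, hkj]

lemma cone_char {i j : I} {a : A} {α : I → ℤ} (hroot : α ∈ C.roots a)
    (hp : IsPosV α) (hsupp : ∀ k, k ≠ i → k ≠ j → α k = 0) (hij : i ≠ j) :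
    α ∈ coneSet C i j a := by
  refine ⟨hroot, (α i).toNat, (α j).toNat, ?_⟩
  funext k
  simp only [Pi.add_apply, Pi.smul_apply, smul_eq_mul]
  rcases eq_or_ne k i with rfl | hki
  · simp [Pi.single_apply, hij, Int.toNat_of_nonneg (hp k)]
  · rcases eq_or_ne k j with rfl | hkj
    · simp [Pi.single_apply, hki, Ne.symm hij, Int.toNat_of_nonneg (hp k)]
    · simp [Pi.single_apply, hki, hkj, hsupp k hki hkj]

lemma single_mem_coneSet (i j : I) (a : A) : (Pi.single i 1 : I → ℤ) ∈ coneSet C i j a := by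
  refine ⟨single_mem_roots a i, 1, 0, ?_⟩
  simp

lemma single_mem_coneSet' (i j : I) (a : A) : (Pi.single j 1 : I → ℤ) ∈ coneSet C i j a := by
  refine ⟨single_mem_roots a j, 0, 1, ?_⟩
  simp

lemma cone_neg_of_descents (hij : i ≠ j) {w : Mor C}
    (hi : IsNegV (w.toFun (Pi.single i 1))) (hj : IsNegV (w.toFun (Pi.single j 1)))
    {α : I → ℤ} (hα : α ∈ coneSet C i j w.src) : IsNegV (w.toFun α) := by
  obtain ⟨-, m, n, rfl⟩ := hα
  rw [Mor.toFun_add, Mor.toFun_smul, Mor.toFun_smul]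
  intro k
  simp only [Pi.add_apply, Pi.smul_apply, smul_eq_mul]
  have h1 := hi k
  have h2 := hj k
  have hm : (0:ℤ) ≤ (m:ℤ) := Int.ofNat_nonneg m
  have hn : (0:ℤ) ≤ (n:ℤ) := Int.ofNat_nonneg n
  nlinarith

/-- Invariance of the cone cardinality under `ρ_i`. -/
lemma coneCard_rho_left (hC : C.IsFRS) (hij : i ≠ j) (a : A) :
    (coneSet C i j (C.ρ i a)).ncard = (coneSet C i j a).ncard := by
  classical
  have key : ∀ b b' : A, b' = C.ρ i b →
      ∀ α ∈ coneSet C i j b' \ {Pi.single i 1}, C.sigma b' i α ∈ coneSet C i j b \ {Pi.single i 1} := by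
    intro b b' hb α hmem
    obtain ⟨hα, hne⟩ := hmem
    have hroot : C.sigma b' i α ∈ C.roots b := by
      have h2 : C.sigma b' i α ∈ C.roots (C.ρ i b') := roots_map (genMor C i b') hα.1
      have h3 : C.ρ i b' = b := by rw [hb, C.ρ_invol]
      rwa [h3] at h2
    have hpos : IsPosV (C.sigma b' i α) :=
      sigma_pos hC hα.1 (cone_pos hα) (by simpa using hne)
    have hsupp : ∀ k, k ≠ i → k ≠ j → C.sigma b' i α k = 0 := by
      intro k hki hkj
      rw [sigma_apply_ne hki]
      exact cone_supp hα k hki hkj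
    refine ⟨cone_char hroot hpos hsupp hij, ?_⟩
    intro hcontr
    simp only [Set.mem_singleton_iff] at hcontr
    have hα2 : α = C.sigma b' i (Pi.single i 1) := by
      rw [← hcontr, sigma_invol]
    rw [sigma_single_self] at hα2
    have hpos2 := cone_pos hα i
    rw [hα2] at hpos2
    simp [Pi.single_apply] at hpos2
  have hinv : ∀ b' : A, Function.Injective (C.sigma b' i) := fun b' => sigma_injective b' i
  have him : coneSet C i j a \ {Pi.single i 1}
      = C.sigma (C.ρ i a) i '' (coneSet C i j (C.ρ i a) \ {Pi.single i 1}) := by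
    apply Set.Subset.antisymm
    · intro β hβ
      have h1 : C.sigma a i β ∈ coneSet C i j (C.ρ i a) \ {Pi.single i 1} := by
        have := key (C.ρ i a) a (C.ρ_invol i a).symm β hβ
        exact this
      refine ⟨C.sigma a i β, h1, ?_⟩
      rw [sigma_rho]
      exact sigma_invol a i β
    · rintro β ⟨α, hα, rfl⟩
      exact key a (C.ρ i a) rfl α hα
  have h1 : (coneSet C i j a \ {Pi.single i 1}).ncard
      = (coneSet C i j (C.ρ i a) \ {Pi.single i 1}).ncard := by
    rw [him, Set.ncard_image_of_injective _ (hinv (C.ρ i a))]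
  have h2 := Set.ncard_diff_singleton_add_one (single_mem_coneSet (C := C) i j a)
    (coneSet_finite hC i j a)
  have h3 := Set.ncard_diff_singleton_add_one (single_mem_coneSet (C := C) i j (C.ρ i a))
    (coneSet_finite hC i j (C.ρ i a))
  omega

lemma coneCard_rho_right (hC : C.IsFRS) (hij : i ≠ j) (a : A) :
    (coneSet C i j (C.ρ j a)).ncard = (coneSet C i j a).ncard := by
  rw [coneSet_comm, coneCard_rho_left hC (Ne.symm hij), coneSet_comm]

/-! ### Alternating words -/

def altLetter (i j : I) (r : ℕ) : I := if r % 2 = 0 then i else j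

lemma altLetter_mem (i j : I) (r : ℕ) : altLetter i j r = i ∨ altLetter i j r = j := by
  unfold altLetter; split <;> simp

lemma altLetter_succ_ne (hij : i ≠ j) (r : ℕ) : altLetter i j (r + 1) ≠ altLetter i j r := by
  unfold altLetter
  rcases Nat.mod_two_eq_zero_or_one r with h | h
  · have h1 : (r + 1) % 2 = 1 := by omega
    simp [h, h1]
    exact Ne.symm hij
  · have h1 : (r + 1) % 2 = 0 := by omega
    simp [h, h1]
    exact hij

def altWord (i j : I) : ℕ → List I
  | 0 => []
  | r + 1 => altWord i j r ++ [altLetter i j r]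

lemma altWord_length (i j : I) (r : ℕ) : (altWord i j r).length = r := by
  induction r with
  | zero => rfl
  | succ r ih => simp [altWord, ih]

lemma altWord_letters (i j : I) : ∀ r, ∀ x ∈ altWord i j r, x = i ∨ x = j := by
  intro r
  induction r with
  | zero => intro x hx; simp [altWord] at hx
  | succ r ih =>
      intro x hx
      simp only [altWord, List.mem_append, List.mem_singleton] at hx
      rcases hx with hx | rfl
      · exact ih x hx
      · exact altLetter_mem i j r

def altSrc (C : CartanScheme I A) (i j : I) (a : A) : ℕ → A
  | 0 => a
  | r + 1 => C.ρ (altLetter i j r) (altSrc C i j a r)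

lemma altWordTarget (i j : I) (a : A) :
    ∀ r, C.wordTarget (altSrc C i j a r) (altWord i j r) = a := by
  intro r
  induction r with
  | zero => rfl
  | succ r ih =>
      show C.wordTarget (C.ρ (altLetter i j r) (altSrc C i j a r))
        (altWord i j r ++ [altLetter i j r]) = a
      rw [wordTarget_append]
      have : C.wordTarget (C.ρ (altLetter i j r) (altSrc C i j a r)) [altLetter i j r]
          = altSrc C i j a r := by
        simp [wordTarget, C.ρ_invol]
      rw [this, ih]

def altMor (C : CartanScheme I A) (i j : I) (a : A) (r : ℕ) : Mor C :=
  ⟨altSrc C i j a r, a, C.wordMap (altSrc C i j a r) (altWord i j r),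
    ⟨altWord i j r, altWordTarget i j a r, rfl⟩⟩

lemma realizes_altMor (i j : I) (a : A) (r : ℕ) :
    Realizes (altMor C i j a r) (altWord i j r) := ⟨altWordTarget i j a r, rfl⟩

@[simp] lemma altMor_src (i j : I) (a : A) (r : ℕ) :
    (altMor C i j a r).src = altSrc C i j a r := rfl

@[simp] lemma altMor_tgt (i j : I) (a : A) (r : ℕ) : (altMor C i j a r).tgt = a := rfl

lemma altMor_succ (i j : I) (a : A) (r : ℕ) :
    altMor C i j a (r + 1)
      = (altMor C i j a r).comp (sgen C (altMor C i j a r).src (altLetter i j r)) := by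
  have hcond : (sgen C (altMor C i j a r).src (altLetter i j r)).tgt
      = (altMor C i j a r).src := rfl
  ext1
  · rw [comp_src hcond]; exact rfl
  · rw [comp_tgt hcond]; exact rfl
  · rw [comp_toFun hcond]
    show C.wordMap (C.ρ (altLetter i j r) (altSrc C i j a r))
        (altWord i j r ++ [altLetter i j r]) = _
    rw [wordMap_append]
    have h1 : C.wordTarget (C.ρ (altLetter i j r) (altSrc C i j a r)) [altLetter i j r]
        = altSrc C i j a r := by
      simp [wordTarget, C.ρ_invol]
    have h2 : C.wordMap (C.ρ (altLetter i j r) (altSrc C i j a r)) [altLetter i j r]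
        = C.sigma (C.ρ (altLetter i j r) (altSrc C i j a r)) (altLetter i j r) := rfl
    rw [h1, h2]
    rfl

lemma coneCard_altSrc (hC : C.IsFRS) (hij : i ≠ j) (a : A) :
    ∀ r, (coneSet C i j (altSrc C i j a r)).ncard = (coneSet C i j a).ncard := by
  intro r
  induction r with
  | zero => rfl
  | succ r ih =>
      show (coneSet C i j (C.ρ (altLetter i j r) (altSrc C i j a r))).ncard = _
      rcases altLetter_mem i j r with h | h <;> rw [h]
      · rw [coneCard_rho_left hC hij, ih]
      · rw [coneCard_rho_right hC hij, ih]

/-! ### Greedy invariants for alternating words -/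

lemma alt_inv (hC : C.IsFRS) (hij : i ≠ j) (a : A) :
    ∀ r, r ≤ (coneSet C i j a).ncard →
      invN (altMor C i j a r) = r ∧
      invSet (altMor C i j a r) ⊆ coneSet C i j (altSrc C i j a r) ∧
      (0 < r → IsNegV ((altMor C i j a r).toFun (Pi.single (altLetter i j (r - 1)) 1))) := by
  intro r
  induction r with
  | zero =>
      intro _
      refine ⟨invN_of_realizes_nil (realizes_altMor i j a 0), ?_, fun h => absurd h (lt_irrefl 0)⟩
      rw [invSet_of_realizes_nil (realizes_altMor i j a 0)]
      exact Set.empty_subset _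
  | succ r IH =>
      intro hr1
      obtain ⟨ih1, ih2, ih3⟩ := IH (Nat.le_of_succ_le hr1)
      set w := altMor C i j a r with hw
      set t := altLetter i j r with ht
      have nostall : ¬ IsNegV (w.toFun (Pi.single t 1)) := by
        intro hst
        have hmem_t : (Pi.single t 1 : I → ℤ) ∈ invSet w :=
          ⟨single_mem_roots _ t, isPosV_single t, hst⟩
        rcases Nat.eq_zero_or_pos r with rfl | hrpos
        · rw [invSet_of_realizes_nil (realizes_altMor i j a 0)] at hmem_t
          exact hmem_t
        · obtain ⟨s, rfl⟩ := Nat.exists_eq_succ_of_ne_zero (Nat.pos_iff_ne_zero.mp hrpos)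
          have hprev : IsNegV (w.toFun (Pi.single (altLetter i j s) 1)) := by
            have := ih3 (Nat.succ_pos s)
            simpa using this
          have hne : t ≠ altLetter i j s := by
            rw [ht]; exact altLetter_succ_ne hij s
          have hboth : IsNegV (w.toFun (Pi.single i 1)) ∧ IsNegV (w.toFun (Pi.single j 1)) := by
            rcases altLetter_mem i j (s + 1) with h1 | h1 <;>
              rcases altLetter_mem i j s with h2 | h2
            · exact absurd (by rw [ht, h1, h2]) hne
            · exact ⟨by rw [← h1, ← ht]; exact hst, by rw [← h2]; exact hprev⟩
            · exact ⟨by rw [← h2]; exact hprev, by rw [← h1, ← ht]; exact hst⟩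
            · exact absurd (by rw [ht, h1, h2]) hne
          have hsub : coneSet C i j (altSrc C i j a (s + 1)) ⊆ invSet w := by
            intro α hα
            exact ⟨hα.1, cone_pos hα, cone_neg_of_descents hij hboth.1 hboth.2 hα⟩
          have hcard := Set.ncard_le_ncard hsub (invSet_finite hC w)
          rw [coneCard_altSrc hC hij a (s + 1)] at hcard
          have hiv : (invSet w).ncard = s + 1 := ih1
          omega
      refine ⟨?_, ?_, ?_⟩
      · rw [altMor_succ, invN_comp_sgen_of_not_neg hC w t nostall, ih1]
      · rw [altMor_succ, invSet_comp_sgen_of_not_neg hC w t nostall]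
        rintro β (rfl | ⟨α, hα, rfl⟩)
        · show (Pi.single t 1 : I → ℤ) ∈ coneSet C i j (altSrc C i j a (r + 1))
          rcases altLetter_mem i j r with h1 | h1
          · rw [ht, h1]; exact single_mem_coneSet i j _
          · rw [ht, h1]; exact single_mem_coneSet' i j _
        · have hαc := ih2 hα
          have hαne : α ≠ Pi.single t 1 := by
            rintro rfl
            exact nostall hα.2.2
          have hroot : C.sigma w.src t α ∈ C.roots (C.ρ t w.src) :=
            roots_map (genMor C t w.src) hα.1
          have hpos : IsPosV (C.sigma w.src t α) := sigma_pos hC hα.1 hα.2.1 hαne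
          have hsupp : ∀ k, k ≠ i → k ≠ j → C.sigma w.src t α k = 0 := by
            intro k hki hkj
            have hkt : k ≠ t := by
              rcases altLetter_mem i j r with h1 | h1
              · rw [ht, h1]; exact hki
              · rw [ht, h1]; exact hkj
            rw [sigma_apply_ne hkt]
            exact cone_supp hαc k hki hkj
          exact cone_char hroot hpos hsupp hij
      · intro _
        have hred : r + 1 - 1 = r := rfl
        rw [hred, altMor_succ, comp_sgen_toFun]
        show IsNegV (w.toFun (C.sigma w.src t (Pi.single t 1)))
        rw [sigma_single_self, Mor.toFun_neg]
        exact isNegV_neg_iff.mpr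
          (pos_of_not_neg hC (roots_map w (single_mem_roots _ t)) nostall)

lemma invSet_altMor_full (hC : C.IsFRS) (hij : i ≠ j) (a : A) :
    invSet (altMor C i j a ((coneSet C i j a).ncard))
      = coneSet C i j (altSrc C i j a ((coneSet C i j a).ncard)) := by
  obtain ⟨h1, h2, -⟩ := alt_inv hC hij a ((coneSet C i j a).ncard) le_rfl
  refine Set.eq_of_subset_of_ncard_le h2 ?_ (coneSet_finite hC i j _)
  have h1' : (invSet (altMor C i j a ((coneSet C i j a).ncard))).ncard
      = (coneSet C i j a).ncard := h1
  rw [coneCard_altSrc hC hij a, h1']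

/-! ### `R4` object identities -/

lemma R4' (hC : C.IsFRS) (hij : i ≠ j) (a : A) :
    (fun x => C.ρ i (C.ρ j x))^[(coneSet C i j a).ncard] a = a := hC.2.2.2 a i j hij

lemma rho_iter_cancel (i j : I) : ∀ (s : ℕ) (x : A),
    (fun y => C.ρ i (C.ρ j y))^[s] ((fun y => C.ρ j (C.ρ i y))^[s] x) = x := by
  intro s
  induction s with
  | zero => intro x; rfl
  | succ s ih =>
      intro x
      rw [Function.iterate_succ_apply' (fun y => C.ρ j (C.ρ i y)) s x,
          Function.iterate_succ_apply (fun y => C.ρ i (C.ρ j y)) s]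
      show (fun y => C.ρ i (C.ρ j y))^[s]
        (C.ρ i (C.ρ j (C.ρ j (C.ρ i ((fun y => C.ρ j (C.ρ i y))^[s] x))))) = x
      rw [C.ρ_invol j, C.ρ_invol i]
      exact ih x

lemma rho_comm_iter (i j : I) : ∀ (s : ℕ) (x : A),
    C.ρ i ((fun y => C.ρ j (C.ρ i y))^[s] x)
      = (fun y => C.ρ i (C.ρ j y))^[s] (C.ρ i x) := by
  intro s
  induction s with
  | zero => intro x; rfl
  | succ s ih =>
      intro x
      rw [Function.iterate_succ_apply (fun y => C.ρ j (C.ρ i y)) s x,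
          Function.iterate_succ_apply (fun y => C.ρ i (C.ρ j y)) s (C.ρ i x)]
      rw [ih (C.ρ j (C.ρ i x))]

lemma altLetter_two_mul (i j : I) (s : ℕ) : altLetter i j (2 * s) = i := by
  simp [altLetter, Nat.mul_mod_right]

lemma altLetter_two_mul_add_one (i j : I) (s : ℕ) : altLetter i j (2 * s + 1) = j := by
  have h : (2 * s + 1) % 2 = 1 := by omega
  simp [altLetter, h]

lemma altSrc_even (i j : I) (a : A) : ∀ s : ℕ,
    altSrc C i j a (2 * s) = (fun y => C.ρ j (C.ρ i y))^[s] a := by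
  intro s
  induction s with
  | zero => rfl
  | succ s ih =>
      have h2 : 2 * (s + 1) = (2 * s + 1) + 1 := by ring
      rw [h2]
      show C.ρ (altLetter i j (2 * s + 1)) (C.ρ (altLetter i j (2 * s)) (altSrc C i j a (2 * s)))
        = _
      rw [altLetter_two_mul, altLetter_two_mul_add_one, ih,
        Function.iterate_succ_apply' (fun y => C.ρ j (C.ρ i y)) s a]

lemma altSrc_odd (i j : I) (a : A) (s : ℕ) :
    altSrc C i j a (2 * s + 1) = C.ρ i ((fun y => C.ρ j (C.ρ i y))^[s] a) := by
  show C.ρ (altLetter i j (2 * s)) (altSrc C i j a (2 * s)) = _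
  rw [altLetter_two_mul, altSrc_even]

lemma altSrc_eq (hC : C.IsFRS) (hij : i ≠ j) (a : A) :
    altSrc C i j a ((coneSet C i j a).ncard)
      = altSrc C j i a ((coneSet C i j a).ncard) := by
  set M := (coneSet C i j a).ncard with hM
  rcases Nat.even_or_odd M with ⟨s, hs⟩ | ⟨s, hs⟩
  · have hs2 : M = 2 * s := by omega
    rw [hs2, altSrc_even i j a s, altSrc_even j i a s]
    have hR4 : (fun x => C.ρ i (C.ρ j x))^[M] a = a := R4' hC hij a
    rw [hs2, two_mul, Function.iterate_add_apply] at hR4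
    have := congrArg (fun x => (fun y => C.ρ j (C.ρ i y))^[s] x) hR4
    rw [rho_iter_cancel j i s] at this
    rw [← this]
  · have hs2 : M = 2 * s + 1 := by omega
    rw [hs2, altSrc_odd i j a s, altSrc_odd j i a s]
    rw [rho_comm_iter i j s a, rho_comm_iter j i s a]
    have hR4 : (fun x => C.ρ i (C.ρ j x))^[M] (C.ρ j a) = C.ρ j a := by
      have h1 := R4' hC hij (C.ρ j a)
      rwa [coneCard_rho_right hC hij a, ← hM] at h1
    rw [hs2] at hR4
    have hstep : (fun x => C.ρ i (C.ρ j x))^[2 * s + 1] (C.ρ j a)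
        = (fun x => C.ρ i (C.ρ j x))^[2 * s] (C.ρ i a) := by
      rw [Function.iterate_succ_apply]
      show (fun x => C.ρ i (C.ρ j x))^[2 * s] (C.ρ i (C.ρ j (C.ρ j a))) = _
      rw [C.ρ_invol j]
    rw [hstep, two_mul, Function.iterate_add_apply] at hR4
    have := congrArg (fun x => (fun y => C.ρ j (C.ρ i y))^[s] x) hR4
    rw [rho_iter_cancel j i s] at this
    rw [← this]

/-! ### Positivity preservation by `z₁ ∘ z₂⁻¹` -/

lemma posPres_of_full (hC : C.IsFRS) {a : A} {z1 z2 : Mor C}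
    (hsrc : z1.src = z2.src) (htgt1 : z1.tgt = a) (htgt2 : z2.tgt = a)
    (hfull1 : invSet z1 = coneSet C i j z1.src)
    (hfull2 : invSet z2 = coneSet C i j z2.src)
    {γ : I → ℤ} (hγr : γ ∈ C.roots a) (hγp : IsPosV γ) :
    IsPosV ((z1.comp z2.inv).toFun γ) := by
  have hcond : z2.inv.tgt = z1.src := by rw [Mor.inv_tgt, hsrc]
  rw [comp_toFun hcond]
  set ξ := z2.inv.toFun γ with hξ
  have hξroot : ξ ∈ C.roots z2.src := by
    have := roots_map z2.inv (α := γ) (by rw [Mor.inv_src, htgt2]; exact hγr)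
    rwa [Mor.inv_tgt] at this
  have hz2ξ : z2.toFun ξ = γ := Mor.apply_inv_apply z2 γ
  rcases root_pos_or_neg hC hξroot with hpos | hneg
  · have hnc : ξ ∉ coneSet C i j z2.src := by
      intro hc
      have hmem : ξ ∈ invSet z2 := by rw [hfull2]; exact hc
      have := hmem.2.2
      rw [hz2ξ] at this
      exact not_neg_of_pos hγr hγp this
    have hξroot1 : ξ ∈ C.roots z1.src := by rwa [hsrc]
    have hnotinv : ¬ IsNegV (z1.toFun ξ) := by
      intro hneg1
      exact hnc (by
        have : ξ ∈ invSet z1 := ⟨hξroot1, hpos, hneg1⟩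
        rw [hfull1, hsrc] at this
        exact this)
    show IsPosV (z1.toFun ξ)
    exact pos_of_not_neg hC (roots_map z1 hξroot1) hnotinv
  · have hmξpos : IsPosV (-ξ) := isPosV_neg_iff.mpr hneg
    have hmem2 : -ξ ∈ invSet z2 := by
      refine ⟨neg_mem_roots hξroot, hmξpos, ?_⟩
      rw [Mor.toFun_neg, hz2ξ]
      exact isNegV_neg_iff.mpr hγp
    have hmem1 : -ξ ∈ invSet z1 := by
      rw [hfull1, hsrc]
      rw [hfull2] at hmem2
      exact hmem2
    have hneg1 : IsNegV (z1.toFun (-ξ)) := hmem1.2.2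
    rw [Mor.toFun_neg] at hneg1
    show IsPosV (z1.toFun ξ)
    exact isNegV_neg_iff.mp hneg1

/-! ### A rank-two determinant invariant -/

def det2 (i j : I) (f : (I → ℤ) → (I → ℤ)) : ℤ :=
  f (Pi.single i 1) i * f (Pi.single j 1) j - f (Pi.single i 1) j * f (Pi.single j 1) i

lemma det2_id (hij : i ≠ j) : det2 i j (id : (I → ℤ) → (I → ℤ)) = 1 := by
  simp [det2, Pi.single_apply, hij, Ne.symm hij]

lemma det2_comm (i j : I) (f : (I → ℤ) → (I → ℤ)) : det2 i j f = det2 j i f := by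
  unfold det2; ring

lemma sum_c_mul_of_IJsupp (hij : i ≠ j) (o : A) (t : I) {w : I → ℤ}
    (hw : ∀ k, k ≠ i → k ≠ j → w k = 0) :
    ∑ l, C.c o t l * w l = C.c o t i * w i + C.c o t j * w j := by
  have h1 : ∑ x ∈ ({i, j} : Finset I), C.c o t x * w x
      = C.c o t i * w i + C.c o t j * w j := Finset.sum_pair hij
  rw [← h1]
  symm
  apply Finset.sum_subset (Finset.subset_univ _)
  intro x _ hx
  simp only [Finset.mem_insert, Finset.mem_singleton] at hx
  push_neg at hx
  rw [hw x hx.1 hx.2, mul_zero]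

lemma sigma_coord_self (hij : i ≠ j) (o : A) {w : I → ℤ}
    (hw : ∀ k, k ≠ i → k ≠ j → w k = 0) :
    C.sigma o i w i = -w i - C.c o i j * w j := by
  have h1 : C.sigma o i w i = w i - ∑ l, C.c o i l * w l := by
    simp [sigma_apply]
  rw [h1, sum_c_mul_of_IJsupp hij o i hw, C.c_diag]
  ring

lemma det2_sigma_comp_left (hij : i ≠ j) (o : A) {g : (I → ℤ) → (I → ℤ)}
    (hgi : ∀ k, k ≠ i → k ≠ j → g (Pi.single i 1) k = 0)
    (hgj : ∀ k, k ≠ i → k ≠ j → g (Pi.single j 1) k = 0) :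
    det2 i j (C.sigma o i ∘ g) = -det2 i j g := by
  unfold det2
  simp only [Function.comp_apply]
  rw [sigma_apply_ne (Ne.symm hij) o (g (Pi.single i 1)),
      sigma_apply_ne (Ne.symm hij) o (g (Pi.single j 1)),
      sigma_coord_self hij o hgi, sigma_coord_self hij o hgj]
  ring

lemma det2_sigma_comp (hij : i ≠ j) (o : A) {t : I} (ht : t = i ∨ t = j)
    {g : (I → ℤ) → (I → ℤ)}
    (hgi : ∀ k, k ≠ i → k ≠ j → g (Pi.single i 1) k = 0)
    (hgj : ∀ k, k ≠ i → k ≠ j → g (Pi.single j 1) k = 0) :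
    det2 i j (C.sigma o t ∘ g) = -det2 i j g := by
  rcases ht with rfl | rfl
  · exact det2_sigma_comp_left hij o hgi hgj
  · rw [det2_comm, det2_sigma_comp_left (Ne.symm hij) o
      (fun k h1 h2 => hgj k h2 h1) (fun k h1 h2 => hgi k h2 h1), det2_comm]

lemma mem_pair_set {i j x : I} (h : x = i ∨ x = j) : x ∈ ({i, j} : Set I) := by
  rcases h with rfl | rfl
  · exact Set.mem_insert _ _
  · exact Set.mem_insert_of_mem _ rfl

lemma not_mem_pair_set {i j k : I} (h1 : k ≠ i) (h2 : k ≠ j) : k ∉ ({i, j} : Set I) := by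
  simp [h1, h2]

lemma det2_wordMap (hij : i ≠ j) : ∀ (l : List I) (b : A), (∀ x ∈ l, x = i ∨ x = j) →
    det2 i j (C.wordMap b l) = (-1 : ℤ) ^ l.length := by
  intro l
  induction l with
  | nil =>
      intro b _
      have h0 : det2 i j (C.wordMap b []) = det2 i j (id : (I → ℤ) → (I → ℤ)) := rfl
      rw [h0, det2_id hij]
      simp
  | cons t m ih =>
      intro b hl
      have hm : ∀ x ∈ m, x = i ∨ x = j := fun x hx => hl x (List.mem_cons_of_mem t hx)
      have hsup : ∀ s : I, ∀ k, k ≠ i → k ≠ j →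
          C.wordMap b m (Pi.single s 1) k = (Pi.single s 1 : I → ℤ) k := by
        intro s k hki hkj
        exact wordMap_coord (J := ({i, j} : Set I))
          (fun x hx => mem_pair_set (hm x hx)) b _ (not_mem_pair_set hki hkj)
      have hsupi : ∀ k, k ≠ i → k ≠ j → C.wordMap b m (Pi.single i 1) k = 0 := by
        intro k hki hkj
        rw [hsup i k hki hkj]
        simp [Pi.single_apply, hki]
      have hsupj : ∀ k, k ≠ i → k ≠ j → C.wordMap b m (Pi.single j 1) k = 0 := by
        intro k hki hkj
        rw [hsup j k hki hkj]
        simp [Pi.single_apply, hkj]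
      have hstep : det2 i j (C.wordMap b (t :: m))
          = det2 i j (C.sigma (C.wordTarget b m) t ∘ C.wordMap b m) := rfl
      rw [hstep, det2_sigma_comp hij _ (hl t List.mem_cons_self) hsupi hsupj, ih b hm]
      simp [pow_succ]

/-! ### Coordinate sums -/

lemma root_coordsum_pos {a : A} {α : I → ℤ} (hroot : α ∈ C.roots a) (hp : IsPosV α) :
    1 ≤ ∑ k, α k := by
  have h0 : α ≠ 0 := roots_ne_zero hroot
  obtain ⟨k, hk⟩ := Function.ne_iff.mp h0
  have hk' : α k ≠ 0 := by simpa using hk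
  have hpos : 0 < ∑ k, α k :=
    Finset.sum_pos' (fun l _ => hp l)
      ⟨k, Finset.mem_univ k, lt_of_le_of_ne (hp k) (Ne.symm hk')⟩
  omega

lemma sum_single_one (s : I) : ∑ k, (Pi.single s 1 : I → ℤ) k = 1 := by
  simp [Pi.single_apply]

/-! ### Classification of conjugates of simple roots -/

lemma conj_single_cases (hC : C.IsFRS) (hij : i ≠ j) {a : A} {y y' : Mor C}
    (hysrc : y.src = a) (hytgt : y.tgt = a) (hy'src : y'.src = a)
    (hy'y : ∀ v, y'.toFun (y.toFun v) = v)
    (hpp : ∀ γ, γ ∈ C.roots a → IsPosV γ → IsPosV (y.toFun γ))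
    (hpp' : ∀ γ, γ ∈ C.roots a → IsPosV γ → IsPosV (y'.toFun γ))
    (hsupp : ∀ v : I → ℤ, ∀ k, k ≠ i → k ≠ j → y.toFun v k = v k)
    {s : I} (hs : s = i ∨ s = j) :
    y.toFun (Pi.single s 1) = Pi.single i 1 ∨ y.toFun (Pi.single s 1) = Pi.single j 1 := by
  have hsing : (Pi.single s 1 : I → ℤ) ∈ C.roots y.src := by
    rw [hysrc]; exact single_mem_roots a s
  have hγroot : y.toFun (Pi.single s 1) ∈ C.roots a := by
    rw [← hytgt]; exact roots_map y hsing
  have hγpos : IsPosV (y.toFun (Pi.single s 1)) :=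
    hpp _ (single_mem_roots a s) (isPosV_single s)
  have hγsupp : ∀ k, k ≠ i → k ≠ j → y.toFun (Pi.single s 1) k = 0 := by
    intro k hki hkj
    rw [hsupp _ k hki hkj]
    have hks : k ≠ s := by
      rcases hs with rfl | rfl
      · exact hki
      · exact hkj
    simp [Pi.single_apply, hks]
  have hγcone : y.toFun (Pi.single s 1) ∈ coneSet C i j a :=
    cone_char hγroot hγpos hγsupp hij
  obtain ⟨-, mm, nn, hform⟩ := hγcone
  have hinv : (Pi.single s 1 : I → ℤ)
      = (mm : ℤ) • y'.toFun (Pi.single i 1) + (nn : ℤ) • y'.toFun (Pi.single j 1) := by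
    have h1 : y'.toFun (y.toFun (Pi.single s 1)) = Pi.single s 1 := hy'y _
    rw [hform] at h1
    rw [Mor.toFun_add, Mor.toFun_smul, Mor.toFun_smul] at h1
    exact h1.symm
  have hSi : 1 ≤ ∑ k, y'.toFun (Pi.single i 1) k :=
    root_coordsum_pos
      (roots_map y' (by rw [hy'src]; exact single_mem_roots a i))
      (hpp' _ (single_mem_roots a i) (isPosV_single i))
  have hSj : 1 ≤ ∑ k, y'.toFun (Pi.single j 1) k :=
    root_coordsum_pos
      (roots_map y' (by rw [hy'src]; exact single_mem_roots a j))
      (hpp' _ (single_mem_roots a j) (isPosV_single j))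
  have hsum : (1 : ℤ) = (mm : ℤ) * (∑ k, y'.toFun (Pi.single i 1) k)
      + (nn : ℤ) * (∑ k, y'.toFun (Pi.single j 1) k) := by
    have h2 := congrArg (fun v : I → ℤ => ∑ k, v k) hinv
    simpa [Finset.sum_add_distrib, Finset.mul_sum, sum_single_one, Pi.add_apply,
      Pi.smul_apply, smul_eq_mul] using h2
  have hmn1 : (mm : ℤ) + (nn : ℤ) ≤ 1 := by
    nlinarith [Int.ofNat_nonneg mm, Int.ofNat_nonneg nn,
      mul_le_mul_of_nonneg_left hSi (Int.ofNat_nonneg mm),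
      mul_le_mul_of_nonneg_left hSj (Int.ofNat_nonneg nn)]
  have hne0 : ¬(mm = 0 ∧ nn = 0) := by
    rintro ⟨rfl, rfl⟩
    apply roots_ne_zero hγroot
    rw [hform]
    simp
  have hcases : (mm = 1 ∧ nn = 0) ∨ (mm = 0 ∧ nn = 1) := by omega
  rcases hcases with ⟨h1, h2⟩ | ⟨h1, h2⟩
  · left; rw [hform, h1, h2]; simp
  · right; rw [hform, h1, h2]; simp

lemma toFun_eq_id_of_basis (w : Mor C) (h : ∀ k, w.toFun (Pi.single k 1) = Pi.single k 1) :
    w.toFun = id := by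
  funext v
  rw [toFun_eq_sum_basis]
  simp only [h]
  show ∑ k, v k • (Pi.single k 1 : I → ℤ) = v
  conv_rhs => rw [← Finset.univ_sum_single v]
  exact Finset.sum_congr rfl fun k _ => (single_eq_smul k (v k)).symm

/-! ### The braid relation -/

theorem braid (hC : C.IsFRS) (hij : i ≠ j) (a : A) :
    altMor C i j a ((coneSet C i j a).ncard) = altMor C j i a ((coneSet C i j a).ncard) := by
  classical
  set M := (coneSet C i j a).ncard with hM
  set z1 := altMor C i j a M with hz1
  set z2 := altMor C j i a M with hz2
  have hsrc : z1.src = z2.src := altSrc_eq hC hij a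
  have hMM : (coneSet C j i a).ncard = M := by rw [hM, coneSet_comm]
  have hfull1 : invSet z1 = coneSet C i j z1.src := invSet_altMor_full hC hij a
  have hfull2 : invSet z2 = coneSet C i j z2.src := by
    have h := invSet_altMor_full hC (Ne.symm hij) a
    rw [hMM] at h
    rw [coneSet_comm]
    exact h
  have hcond : z2.inv.tgt = z1.src := by rw [Mor.inv_tgt, hsrc]
  have hcond' : z1.inv.tgt = z2.src := by rw [Mor.inv_tgt, hsrc]
  set y := z1.comp z2.inv with hy
  set y' := z2.comp z1.inv with hy'
  have hysrc : y.src = a := by rw [hy, comp_src hcond, Mor.inv_src]; rfl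
  have hytgt : y.tgt = a := by rw [hy, comp_tgt hcond]; rfl
  have hy'src : y'.src = a := by rw [hy', comp_src hcond', Mor.inv_src]; rfl
  have hy'tgt : y'.tgt = a := by rw [hy', comp_tgt hcond']; rfl
  have hy'y : ∀ v, y'.toFun (y.toFun v) = v := by
    intro v
    rw [hy, hy', comp_toFun hcond, comp_toFun hcond']
    simp only [Function.comp_apply]
    rw [Mor.inv_apply_apply, Mor.apply_inv_apply]
  have hpp : ∀ γ, γ ∈ C.roots a → IsPosV γ → IsPosV (y.toFun γ) := fun γ h1 h2 =>
    posPres_of_full hC hsrc rfl rfl hfull1 hfull2 h1 h2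
  have hpp' : ∀ γ, γ ∈ C.roots a → IsPosV γ → IsPosV (y'.toFun γ) := fun γ h1 h2 =>
    posPres_of_full hC hsrc.symm rfl rfl hfull2 hfull1 h1 h2
  have hreal_y : Realizes y (altWord i j M ++ (altWord j i M).reverse) :=
    realizes_comp hcond (realizes_altMor i j a M)
      (Mor.realizes_inv (realizes_altMor j i a M))
  have hlet : ∀ x ∈ altWord i j M ++ (altWord j i M).reverse, x = i ∨ x = j := by
    intro x hx
    rcases List.mem_append.mp hx with h | h
    · exact altWord_letters i j M x h
    · have := altWord_letters j i M x (List.mem_reverse.mp h)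
      tauto
  have hysupp : ∀ v : I → ℤ, ∀ k, k ≠ i → k ≠ j → y.toFun v k = v k := by
    intro v k hki hkj
    rw [← hreal_y.2]
    exact wordMap_coord (J := ({i, j} : Set I))
      (fun x hx => mem_pair_set (hlet x hx)) _ _ (not_mem_pair_set hki hkj)
  have hdet : det2 i j y.toFun = 1 := by
    have h2 := det2_wordMap (C := C) hij (altWord i j M ++ (altWord j i M).reverse) y.src hlet
    rw [hreal_y.2] at h2
    rw [h2, List.length_append, List.length_reverse, altWord_length, altWord_length]
    exact Even.neg_one_pow ⟨M, rfl⟩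
  have hyinj : Function.Injective y.toFun := by
    intro u v h
    have := congrArg y'.toFun h
    rwa [hy'y, hy'y] at this
  have hyi := conj_single_cases hC hij hysrc hytgt hy'src hy'y hpp hpp' hysupp (Or.inl rfl)
  have hyj := conj_single_cases hC hij hysrc hytgt hy'src hy'y hpp hpp' hysupp (Or.inr rfl)
  have hsi : y.toFun (Pi.single i 1) = Pi.single i 1 := by
    rcases hyi with h | h
    · exact h
    · exfalso
      have hsj : y.toFun (Pi.single j 1) = Pi.single i 1 := by
        rcases hyj with h2 | h2
        · exact h2
        · exfalso
          have heq : (Pi.single i 1 : I → ℤ) = Pi.single j 1 := hyinj (by rw [h, h2])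
          have := congrFun heq j
          simp [Pi.single_apply, hij] at this
      rw [det2, h, hsj] at hdet
      simp [Pi.single_apply, hij, Ne.symm hij] at hdet
  have hsj : y.toFun (Pi.single j 1) = Pi.single j 1 := by
    rcases hyj with h | h
    · exfalso
      have heq : (Pi.single i 1 : I → ℤ) = Pi.single j 1 := hyinj (by rw [h, hsi])
      have := congrFun heq j
      simp [Pi.single_apply, hij] at this
    · exact h
  have hs'i : y'.toFun (Pi.single i 1) = Pi.single i 1 := by
    conv_lhs => rw [← hsi]
    exact hy'y _
  have hs'j : y'.toFun (Pi.single j 1) = Pi.single j 1 := by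
    conv_lhs => rw [← hsj]
    exact hy'y _
  have hreal_y' : Realizes y' (altWord j i M ++ (altWord i j M).reverse) :=
    realizes_comp hcond' (realizes_altMor j i a M)
      (Mor.realizes_inv (realizes_altMor i j a M))
  have hy'supp : ∀ v : I → ℤ, ∀ k, k ≠ i → k ≠ j → y'.toFun v k = v k := by
    intro v k hki hkj
    rw [← hreal_y'.2]
    refine wordMap_coord (J := ({i, j} : Set I)) ?_ _ _ (not_mem_pair_set hki hkj)
    intro x hx
    rcases List.mem_append.mp hx with hmem | hmem
    · have := altWord_letters j i M x hmem
      exact mem_pair_set (by tauto)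
    · exact mem_pair_set (altWord_letters i j M x (List.mem_reverse.mp hmem))
  have hbasis : ∀ k, y.toFun (Pi.single k 1) = Pi.single k 1 := by
    intro k
    by_cases hki : k = i
    · rw [hki, hsi]
    by_cases hkj : k = j
    · rw [hkj, hsj]
    have hAi : 0 ≤ y.toFun (Pi.single k 1) i :=
      (hpp _ (single_mem_roots a k) (isPosV_single k)) i
    have hBj : 0 ≤ y.toFun (Pi.single k 1) j :=
      (hpp _ (single_mem_roots a k) (isPosV_single k)) j
    have hA'i : 0 ≤ y'.toFun (Pi.single k 1) i :=
      (hpp' _ (single_mem_roots a k) (isPosV_single k)) i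
    have hB'j : 0 ≤ y'.toFun (Pi.single k 1) j :=
      (hpp' _ (single_mem_roots a k) (isPosV_single k)) j
    have hik : ¬ (i = k) := fun h => hki h.symm
    have hjk : ¬ (j = k) := fun h => hkj h.symm
    have e1 : (Pi.single i (1:ℤ) : I → ℤ) i = 1 := by simp
    have e2 : (Pi.single j (1:ℤ) : I → ℤ) i = 0 := by simp [Pi.single_apply, Ne.symm hij]
    have e3 : (Pi.single k (1:ℤ) : I → ℤ) i = 0 := by simp [Pi.single_apply, hik]
    have e4 : (Pi.single j (1:ℤ) : I → ℤ) j = 1 := by simp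
    have e5 : (Pi.single i (1:ℤ) : I → ℤ) j = 0 := by simp [Pi.single_apply, hij]
    have e6 : (Pi.single k (1:ℤ) : I → ℤ) j = 0 := by simp [Pi.single_apply, hjk]
    have hform : y.toFun (Pi.single k 1) = Pi.single k 1
        + (y.toFun (Pi.single k 1) i) • Pi.single i 1
        + (y.toFun (Pi.single k 1) j) • Pi.single j 1 := by
      funext l
      simp only [Pi.add_apply, Pi.smul_apply, smul_eq_mul]
      rcases eq_or_ne l i with rfl | hli
      · rw [e1, e2, e3]; ring
      · rcases eq_or_ne l j with rfl | hlj
        · rw [e4, e5, e6]; ring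
        · have el1 : (Pi.single i (1:ℤ) : I → ℤ) l = 0 := by simp [Pi.single_apply, hli]
          have el2 : (Pi.single j (1:ℤ) : I → ℤ) l = 0 := by simp [Pi.single_apply, hlj]
          rw [hysupp _ l hli hlj, el1, el2]; ring
    have hcomp0 : y'.toFun (y.toFun (Pi.single k 1)) = Pi.single k 1 := hy'y _
    rw [hform, Mor.toFun_add, Mor.toFun_add, Mor.toFun_smul, Mor.toFun_smul, hs'i, hs'j]
      at hcomp0
    have hieq := congrFun hcomp0 i
    have hjeq := congrFun hcomp0 j
    simp only [Pi.add_apply, Pi.smul_apply, smul_eq_mul, e1, e2, e3, e4, e5, e6,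
      mul_one, mul_zero, add_zero] at hieq hjeq
    have hAi0 : y.toFun (Pi.single k 1) i = 0 := by omega
    have hBj0 : y.toFun (Pi.single k 1) j = 0 := by omega
    rw [hform, hAi0, hBj0]
    simp
  have hid : y.toFun = id := toFun_eq_id_of_basis y hbasis
  have hmapeq : z1.toFun = z2.toFun := by
    funext v
    have h1 : y.toFun (z2.toFun v) = z2.toFun v := by rw [hid]; rfl
    rw [hy, comp_toFun hcond] at h1
    simp only [Function.comp_apply] at h1
    rw [Mor.inv_apply_apply] at h1
    exact h1
  ext1
  · exact hsrc
  · rfl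
  · exact hmapeq

/-! ### Helpers for the left-descent lemma -/

lemma sigma_single_ne' {k j : I} (hkj : k ≠ j) (a : A) :
    C.sigma a j (Pi.single k 1) = Pi.single k 1 - C.c a j k • Pi.single j 1 := by
  funext l
  rw [sigma_apply, csum_single]
  simp only [Pi.sub_apply, Pi.smul_apply, smul_eq_mul, Pi.single_apply]
  rcases eq_or_ne l j with rfl | hlj
  · simp [Ne.symm hkj]
  · simp [hlj]

lemma genMor_rho_eq_sgen (t : I) (o : A) : genMor C t (C.ρ t o) = sgen C o t := by
  ext1
  · rfl
  · show C.ρ t (C.ρ t o) = o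
    exact C.ρ_invol t o
  · rfl

lemma altLetter_zero (i j : I) : altLetter i j 0 = i := rfl

lemma altMor_one (i j : I) (a : A) : altMor C i j a 1 = sgen C a i := by
  have h := altMor_succ (C := C) (i := i) (j := j) (a := a) 0
  have h0 : altMor C i j a 0 = idMor C a := by
    ext1 <;> rfl
  rw [h0] at h
  rw [h]
  exact idMor_comp rfl

lemma altWord_head (i j : I) : ∀ r, 1 ≤ r →
    ∃ tl : List I, altWord i j r = i :: tl ∧ tl.length + 1 = r := by
  intro r
  induction r with
  | zero => intro h; omega
  | succ r ih =>
      intro _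
      rcases Nat.eq_zero_or_pos r with rfl | hr
      · exact ⟨[], rfl, rfl⟩
      · obtain ⟨tl, htl, hlen⟩ := ih hr
        refine ⟨tl ++ [altLetter i j r], ?_, ?_⟩
        · show altWord i j r ++ [altLetter i j r] = _
          rw [htl]
          rfl
        · simp only [List.length_append, List.length_cons, List.length_nil]
          omega

lemma alt_nostall (hC : C.IsFRS) (hij : i ≠ j) (a : A) {r : ℕ}
    (hr : r < (coneSet C i j a).ncard) :
    ¬ IsNegV ((altMor C i j a r).toFun (Pi.single (altLetter i j r) 1)) := by
  intro hst
  have h1 := (alt_inv hC hij a r (le_of_lt hr)).1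
  have h2 := (alt_inv hC hij a (r + 1) hr).1
  have h3 := invN_comp_sgen_of_neg hC (altMor C i j a r) (altLetter i j r) hst
  rw [altMor_succ] at h2
  omega

lemma inv_comp_eq {Z yr y : Mor C} (hcond : yr.tgt = Z.src) (h : y = Z.comp yr)
    (v : I → ℤ) : yr.inv.toFun v = y.inv.toFun (Z.toFun v) := by
  apply y.toFun_injective
  rw [Mor.apply_inv_apply]
  rw [h, comp_toFun hcond]
  show Z.toFun (yr.toFun (yr.inv.toFun v)) = Z.toFun v
  rw [Mor.apply_inv_apply]

lemma coneCard_pos (hC : C.IsFRS) (i j : I) (a : A) :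
    1 ≤ (coneSet C i j a).ncard := by
  have h := (Set.ncard_pos (coneSet_finite hC i j a)).mpr ⟨_, single_mem_coneSet i j a⟩
  omega

/-! ### The left-descent lemma -/

theorem left_descent (hC : C.IsFRS) : ∀ n : ℕ, ∀ (y : Mor C) (k : I) (u : List I),
    Realizes y u → u.length = n → invN y = n →
    IsNegV (y.inv.toFun (Pi.single k 1)) →
    ∃ v : List I, Realizes y (k :: v) ∧ v.length + 1 = n := by
  intro n
  induction n using Nat.strong_induction_on with
  | _ n IH =>
  intro y k u hreal hlen hN hdesc
  cases u with
  | nil =>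
      exfalso
      have h1 : y.inv.toFun (Pi.single k 1) = Pi.single k 1 := by
        rw [Mor.inv_eq_iff, ← hreal.2]
        rfl
      rw [h1] at hdesc
      exact not_isNegV_single k hdesc
  | cons j m =>
  by_cases hjk : j = k
  · subst hjk
    refine ⟨m, hreal, ?_⟩
    simpa using hlen
  · -- peel the leftmost letter
    set x := tailMor (C := C) y.src m with hxdef
    have hxr : Realizes x m := realizes_tailMor _ _
    have hyx : y = (genMor C j x.tgt).comp x := eq_genMor_comp_tailMor hreal
    have hlen' : m.length + 1 = n := by simpa using hlen
    have hγroot : x.inv.toFun (Pi.single j 1) ∈ C.roots x.src :=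
      roots_map x.inv (single_mem_roots _ j)
    have hxle : invN x ≤ m.length := invN_le_length hC hxr
    rcases root_pos_or_neg hC hγroot with hxj | hxj
    swap
    · exfalso
      have h1 := invN_genMor_comp_of_neg hC x j hxj
      rw [← hyx] at h1
      omega
    have hxN : invN x = n - 1 := by
      have h1 := invN_genMor_comp_of_pos hC x j hxj
      rw [← hyx] at h1
      omega
    -- inverse through the peeled letter
    have hinvthrough : ∀ v, y.inv.toFun v = x.inv.toFun (C.sigma x.tgt j v) := by
      intro v
      apply y.toFun_injective
      rw [Mor.apply_inv_apply]
      rw [hyx, comp_toFun rfl]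
      show v = C.sigma x.tgt j (x.toFun (x.inv.toFun (C.sigma x.tgt j v)))
      rw [Mor.apply_inv_apply, sigma_invol]
    -- j is a left descent of y
    have hdyj : IsNegV (y.inv.toFun (Pi.single j 1)) := by
      rw [hinvthrough, sigma_single_self, Mor.toFun_neg]
      exact isNegV_neg_iff.mpr hxj
    -- k is a left descent of x
    have hdxk : IsNegV (x.inv.toFun (Pi.single k 1)) := by
      have hexp : y.inv.toFun (Pi.single k 1)
          = x.inv.toFun (Pi.single k 1) + (-(C.c x.tgt j k)) • x.inv.toFun (Pi.single j 1) := by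
        rw [hinvthrough, sigma_single_ne' (fun h => hjk h.symm) x.tgt]
        rw [sub_eq_add_neg, ← neg_smul, Mor.toFun_add, Mor.toFun_smul]
      have hcle : C.c x.tgt j k ≤ 0 := C.c_offdiag_nonpos x.tgt j k hjk
      by_contra hcon
      have hpos : IsPosV (x.inv.toFun (Pi.single k 1)) :=
        pos_of_not_neg hC (roots_map x.inv (single_mem_roots _ k)) hcon
      have hne0 : x.inv.toFun (Pi.single k 1) ≠ 0 :=
        roots_ne_zero (roots_map x.inv (single_mem_roots _ k))
      obtain ⟨l, hl⟩ := Function.ne_iff.mp hne0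
      have hl' : 0 < x.inv.toFun (Pi.single k 1) l :=
        lt_of_le_of_ne (hpos l) (Ne.symm (by simpa using hl))
      have := hdesc l
      rw [hexp] at this
      simp only [Pi.add_apply, Pi.smul_apply, smul_eq_mul] at this
      have h2 := hxj l
      nlinarith
    -- the alternating stripping loop
    have hjk' : j ≠ k := hjk
    set a := y.tgt with hadef
    have haux : ∀ s : ℕ, ∀ (r : ℕ) (yr : Mor C) (ur : List I),
        r + s = (coneSet C j k a).ncard → 1 ≤ r →
        yr.tgt = altSrc C j k a r →
        y = (altMor C j k a r).comp yr →
        Realizes yr ur → ur.length + r = n → invN yr = n - r →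
        ∃ v : List I, Realizes y (k :: v) ∧ v.length + 1 = n := by
      intro s
      induction s with
      | zero =>
          intro r yr ur hrM hr1 htgt hfact hur hurlen hurN
          have hrM' : r = (coneSet C j k a).ncard := by omega
          subst hrM'
          rw [braid hC hjk' a] at hfact
          obtain ⟨tl, htl, htllen⟩ := altWord_head k j _ (coneCard_pos hC j k a)
          have hZr : Realizes (altMor C k j a ((coneSet C j k a).ncard))
              (altWord k j ((coneSet C j k a).ncard)) := by
            have h0 := realizes_altMor (C := C) k j a ((coneSet C j k a).ncard)
            exact h0
          have hcond2 : yr.tgt = (altMor C k j a ((coneSet C j k a).ncard)).src := by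
            rw [htgt]
            show altSrc C j k a _ = altSrc C k j a _
            exact altSrc_eq hC hjk' a
          have hcomp := realizes_comp hcond2 hZr hur
          rw [← hfact] at hcomp
          rw [htl] at hcomp
          refine ⟨tl ++ ur, ?_, ?_⟩
          · simpa using hcomp
          · simp only [List.length_append]
            omega
      | succ s ihs =>
          intro r yr ur hrM hr1 htgt hfact hur hurlen hurN
          have hrlt : r < (coneSet C j k a).ncard := by omega
          set t := altLetter j k r with htdef
          set Z := altMor C j k a r with hZdef
          have hcondZ : yr.tgt = Z.src := htgt
          -- ξ := Z (α_t) is a positive cone root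
          have hξroot : Z.toFun (Pi.single t 1) ∈ C.roots a :=
            roots_map Z (single_mem_roots _ t)
          have hξpos : IsPosV (Z.toFun (Pi.single t 1)) :=
            pos_of_not_neg hC hξroot (alt_nostall hC hjk' a hrlt)
          have hξsupp : ∀ l, l ≠ j → l ≠ k → Z.toFun (Pi.single t 1) l = 0 := by
            intro l hlj hlk
            have hco : C.wordMap (altSrc C j k a r) (altWord j k r) (Pi.single t 1) l
                = (Pi.single t 1 : I → ℤ) l :=
              wordMap_coord (J := ({j, k} : Set I))
                (fun x hx => mem_pair_set (altWord_letters j k r x hx)) _ _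
                (not_mem_pair_set hlj hlk)
            have hlt : l ≠ t := by
              rcases altLetter_mem j k r with h1 | h1 <;> rw [htdef, h1]
              · exact hlj
              · exact hlk
            rw [show Z.toFun = C.wordMap (altSrc C j k a r) (altWord j k r) from rfl, hco]
            simp [Pi.single_apply, hlt]
          have hξcone : Z.toFun (Pi.single t 1) ∈ coneSet C j k a :=
            cone_char hξroot hξpos hξsupp hjk'
          -- t is a left descent of yr
          have hdt : IsNegV (yr.inv.toFun (Pi.single t 1)) := by
            rw [inv_comp_eq hcondZ hfact]
            exact cone_neg_of_descents hjk' hdyj hdesc hξcone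
          -- strip it using the induction hypothesis of the main induction
          have hrn : r ≤ n := by omega
          have hnr : n - r < n := by omega
          obtain ⟨vr, hvr1, hvr2⟩ := IH (n - r) hnr yr t ur hur (by omega) hurN hdt
          set y2 := tailMor (C := C) yr.src vr with hy2def
          have hy2r : Realizes y2 vr := realizes_tailMor _ _
          have hyr_eq : yr = (genMor C t y2.tgt).comp y2 := eq_genMor_comp_tailMor hvr1
          -- target bookkeeping
          have hρ : C.ρ t y2.tgt = yr.tgt := hvr1.1
          have h1' : y2.tgt = altSrc C j k a (r + 1) := by
            show y2.tgt = C.ρ (altLetter j k r) (altSrc C j k a r)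
            rw [← htdef, ← htgt, ← hρ, C.ρ_invol]
          -- factorization bookkeeping
          have hgen_eq : genMor C t y2.tgt = sgen C (altSrc C j k a r) t := by
            rw [show y2.tgt = C.ρ t (altSrc C j k a r) from h1']
            exact genMor_rho_eq_sgen t _
          have hfact' : y = (altMor C j k a (r + 1)).comp y2 := by
            rw [altMor_succ]
            have hc1 : (genMor C t y2.tgt).tgt = Z.src := by
              show C.ρ t y2.tgt = Z.src
              rw [hρ]; exact htgt
            have hc2 : y2.tgt = (genMor C t y2.tgt).src := rfl
            rw [hfact, hyr_eq, ← comp_assoc hc1 hc2, hgen_eq]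
            rfl
          -- inversion count bookkeeping
          have hy2le : invN y2 ≤ vr.length := invN_le_length hC hy2r
          have hγ2root : y2.inv.toFun (Pi.single t 1) ∈ C.roots y2.src :=
            roots_map y2.inv (single_mem_roots _ t)
          have hy2N : invN y2 = n - (r + 1) := by
            rcases root_pos_or_neg hC hγ2root with hp | hp
            · have h2 := invN_genMor_comp_of_pos hC y2 t hp
              rw [← hyr_eq] at h2
              omega
            · exfalso
              have h2 := invN_genMor_comp_of_neg hC y2 t hp
              rw [← hyr_eq] at h2
              omega
          exact ihs (r + 1) y2 vr (by omega) (by omega) h1' hfact' hy2r (by omega) hy2N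
    -- initial data for the loop, at r = 1
    have hx_tgt : x.tgt = altSrc C j k a 1 := by
      show x.tgt = C.ρ (altLetter j k 0) a
      rw [altLetter_zero]
      have hρ : C.ρ j x.tgt = a := hreal.1
      rw [← hρ, C.ρ_invol]
    have hfact1 : y = (altMor C j k a 1).comp x := by
      rw [altMor_one, hyx]
      have : genMor C j x.tgt = sgen C a j := by
        rw [show x.tgt = C.ρ j a from hx_tgt]
        exact genMor_rho_eq_sgen j a
      rw [this]
    exact haux ((coneSet C j k a).ncard - 1) 1 x m
      (by have := coneCard_pos hC j k a; omega) le_rfl hx_tgt hfact1 hxr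
      (by omega) (by omega)

/-! ### Every morphism is realized by a reduced word -/

theorem shorten (hC : C.IsFRS) : ∀ (l : List I) (w : Mor C), Realizes w l →
    ∃ l' : List I, Realizes w l' ∧ l'.length = invN w := by
  intro l
  induction l with
  | nil =>
      intro w h
      exact ⟨[], h, by simp [invN_of_realizes_nil h]⟩
  | cons j m ih =>
      intro w h
      set x := tailMor (C := C) w.src m with hxdef
      have hxr : Realizes x m := realizes_tailMor _ _
      have hwx : w = (genMor C j x.tgt).comp x := eq_genMor_comp_tailMor h
      obtain ⟨l2, hl2r, hl2len⟩ := ih x hxr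
      have hγroot : x.inv.toFun (Pi.single j 1) ∈ C.roots x.src :=
        roots_map x.inv (single_mem_roots _ j)
      rcases root_pos_or_neg hC hγroot with hp | hp
      · have h1 := invN_genMor_comp_of_pos hC x j hp
        rw [← hwx] at h1
        have ht : C.wordTarget w.src l2 = x.tgt := hl2r.1
        have hm2 : C.wordMap w.src l2 = x.toFun := hl2r.2
        refine ⟨j :: l2, ⟨?_, ?_⟩, ?_⟩
        · show C.ρ j (C.wordTarget w.src l2) = w.tgt
          rw [ht]
          have h3 : ((genMor C j x.tgt).comp x).tgt = C.ρ j x.tgt := comp_tgt rfl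
          rw [hwx, h3]
        · show C.sigma (C.wordTarget w.src l2) j ∘ C.wordMap w.src l2 = w.toFun
          rw [ht, hm2, hwx, comp_toFun rfl]
          rfl
        · simp only [List.length_cons, hl2len, h1]
      · have h1 := invN_genMor_comp_of_neg hC x j hp
        rw [← hwx] at h1
        obtain ⟨v, hv1, hv2⟩ := left_descent hC (invN x) x j l2 hl2r hl2len rfl hp
        set x2 := tailMor (C := C) x.src v with hx2def
        have hx2r : Realizes x2 v := realizes_tailMor _ _
        have hx2 : x = (genMor C j x2.tgt).comp x2 := eq_genMor_comp_tailMor hv1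
        have htgt : x.tgt = C.ρ j x2.tgt := by rw [hx2]; exact comp_tgt rfl
        have hweq : w = x2 := by
          have htgtw : w.tgt = C.ρ j x.tgt := by rw [hwx]; exact comp_tgt rfl
          have hfw : w.toFun = C.sigma x.tgt j ∘ x.toFun := by
            rw [hwx]; exact comp_toFun rfl
          have hfx : x.toFun = C.sigma x2.tgt j ∘ x2.toFun := by
            rw [hx2]; exact comp_toFun rfl
          ext1
          · exact rfl
          · rw [htgtw, htgt, C.ρ_invol]
          · rw [hfw, hfx, htgt, sigma_rho]
            funext u2
            show C.sigma x2.tgt j (C.sigma x2.tgt j (x2.toFun u2)) = x2.toFun u2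
            exact sigma_invol _ _ _
        refine ⟨v, ?_, ?_⟩
        · rw [hweq]; exact hx2r
        · omega

lemma realizes_nil_of_invN_zero (hC : C.IsFRS) {w : Mor C} (h0 : invN w = 0) :
    Realizes w [] := by
  obtain ⟨l, hl⟩ := w.exists_realizes
  obtain ⟨l', hl', hlen⟩ := shorten hC l w hl
  rw [h0, List.length_eq_zero_iff] at hlen
  rwa [hlen] at hl'

/-! ### Intersection of parabolic subgroupoids -/

theorem parabolic_inter (hC : C.IsFRS) : ∀ (N : ℕ) (p : Mor C), invN p = N →
    ∀ {J K : Set I}, InParabolic J p → InParabolic K p → InParabolic (J ∩ K) p := by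
  intro N
  induction N using Nat.strong_induction_on with
  | _ N IH =>
  intro p hN J K hJ hK
  rcases Nat.eq_zero_or_pos N with rfl | hpos
  · exact ⟨[], by simp, realizes_nil_of_invN_zero hC hN⟩
  · obtain ⟨i, hi⟩ := exists_descent hC (by omega : invN p ≠ 0)
    obtain ⟨lJ, hlJmem, hlJr⟩ := hJ
    obtain ⟨lK, hlKmem, hlKr⟩ := hK
    have hiJ : i ∈ J := by
      by_contra hiJ
      have hco := wordMap_coord (C := C) hlJmem p.src (Pi.single i 1) (k := i) hiJ
      rw [hlJr.2] at hco
      have h2 := hi i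
      rw [hco] at h2
      simp [Pi.single_apply] at h2
    have hiK : i ∈ K := by
      by_contra hiK
      have hco := wordMap_coord (C := C) hlKmem p.src (Pi.single i 1) (k := i) hiK
      rw [hlKr.2] at hco
      have h2 := hi i
      rw [hco] at h2
      simp [Pi.single_apply] at h2
    set p' := p.comp (sgen C p.src i) with hp'
    have hNp' : invN p = invN p' + 1 := invN_comp_sgen_of_neg hC p i hi
    have hJ' : InParabolic J p' :=
      ⟨lJ ++ [i], by
        intro x hx
        rcases List.mem_append.mp hx with h | h
        · exact hlJmem x h
        · rw [List.mem_singleton.mp h]; exact hiJ,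
        realizes_comp (u := p) (v := sgen C p.src i) rfl hlJr (realizes_sgen p.src i)⟩
    have hK' : InParabolic K p' :=
      ⟨lK ++ [i], by
        intro x hx
        rcases List.mem_append.mp hx with h | h
        · exact hlKmem x h
        · rw [List.mem_singleton.mp h]; exact hiK,
        realizes_comp (u := p) (v := sgen C p.src i) rfl hlKr (realizes_sgen p.src i)⟩
    obtain ⟨ls, hlsmem, hlsr⟩ := IH (invN p') (by omega) p' rfl hJ' hK'
    have hc : (sgen C (C.ρ i p.src) i).tgt = p'.src := by
      show C.ρ i p.src = p'.src
      rw [hp', comp_src rfl]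
      rfl
    have hback : p = p'.comp (sgen C (C.ρ i p.src) i) := by
      ext1
      · rw [comp_src hc]
        show p.src = C.ρ i (C.ρ i p.src)
        rw [C.ρ_invol]
      · rw [comp_tgt hc]
        rw [hp', comp_tgt rfl]
      · rw [comp_toFun hc]
        show p.toFun = p'.toFun ∘ C.sigma (C.ρ i (C.ρ i p.src)) i
        rw [hp', comp_toFun rfl]
        show p.toFun = (p.toFun ∘ C.sigma (C.ρ i p.src) i) ∘ C.sigma (C.ρ i (C.ρ i p.src)) i
        rw [sigma_rho (C.ρ i p.src) i]
        funext u2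
        show p.toFun u2 = p.toFun (C.sigma (C.ρ i p.src) i (C.sigma (C.ρ i p.src) i u2))
        rw [sigma_invol]
    refine ⟨ls ++ [i], ?_, ?_⟩
    · intro x hx
      rcases List.mem_append.mp hx with h | h
      · exact hlsmem x h
      · rw [List.mem_singleton.mp h]; exact ⟨hiJ, hiK⟩
    · rw [hback]
      exact realizes_comp hc hlsr (realizes_sgen _ i)

/-! ### Coset lemmas -/

lemma inParabolic_mono {J K : Set I} (h : J ⊆ K) {p : Mor C} :
    InParabolic J p → InParabolic K p :=
  fun ⟨l, hl, hr⟩ => ⟨l, fun i hi => h (hl i hi), hr⟩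

lemma inParabolic_comp {J : Set I} {p q : Mor C} (hc : q.tgt = p.src)
    (hp : InParabolic J p) (hq : InParabolic J q) : InParabolic J (p.comp q) := by
  obtain ⟨lp, hlp, hrp⟩ := hp
  obtain ⟨lq, hlq, hrq⟩ := hq
  refine ⟨lp ++ lq, ?_, realizes_comp hc hrp hrq⟩
  intro i hi
  rcases List.mem_append.mp hi with h | h
  · exact hlp i h
  · exact hlq i h

lemma inParabolic_inv {J : Set I} {p : Mor C} (hp : InParabolic J p) :
    InParabolic J p.inv := by
  obtain ⟨l, hl, hr⟩ := hp
  exact ⟨l.reverse, fun i hi => hl i (List.mem_reverse.mp hi), Mor.realizes_inv hr⟩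

lemma coset_eq_of_mem {u z : Mor C} {J : Set I} (hz : z ∈ leftCoset u J) :
    leftCoset z J = leftCoset u J := by
  obtain ⟨p, hp, hpt, rfl⟩ := hz
  ext x
  constructor
  · rintro ⟨q, hq, hqt, rfl⟩
    have hqt' : q.tgt = p.src := by rwa [comp_src hpt] at hqt
    refine ⟨p.comp q, inParabolic_comp hqt' hp hq, ?_, ?_⟩
    · rw [comp_tgt hqt']; exact hpt
    · exact comp_assoc hpt hqt'
  · rintro ⟨r, hr, hrt, rfl⟩
    have hc1 : r.tgt = p.inv.src := by rw [Mor.inv_src, hpt]; exact hrt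
    refine ⟨p.inv.comp r, inParabolic_comp hc1 (inParabolic_inv hp) hr, ?_, ?_⟩
    · rw [comp_tgt hc1, Mor.inv_tgt, comp_src hpt]
    · have hct' : (p.inv.comp r).tgt = p.src := by rw [comp_tgt hc1, Mor.inv_tgt]
      have hinner : p.comp (p.inv.comp r) = r := by
        rw [← comp_assoc (Mor.inv_tgt p) hc1, comp_inv p]
        exact idMor_comp (hrt.trans hpt.symm)
      rw [comp_assoc hpt hct', hinner]

lemma coset_inter_self (hC : C.IsFRS) (z : Mor C) (J K : Set I) :
    leftCoset z J ∩ leftCoset z K = leftCoset z (J ∩ K) := by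
  ext x
  constructor
  · rintro ⟨⟨p, hp, hpt, rfl⟩, ⟨q, hq, hqt, hx2⟩⟩
    have hpq : p = q := by
      ext1
      · have h1 : (z.comp p).src = (z.comp q).src := by rw [← hx2]
        rwa [comp_src hpt, comp_src hqt] at h1
      · rw [hpt, hqt]
      · have h1 : (z.comp p).toFun = (z.comp q).toFun := by rw [← hx2]
        rw [comp_toFun hpt, comp_toFun hqt] at h1
        funext v
        exact z.toFun_injective (congrFun h1 v)
    rw [← hpq] at hq
    exact ⟨p, parabolic_inter hC (invN p) p rfl hp hq, hpt, rfl⟩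
  · rintro ⟨p, hp, hpt, rfl⟩
    exact ⟨⟨p, inParabolic_mono Set.inter_subset_left hp, hpt, rfl⟩,
           ⟨p, inParabolic_mono Set.inter_subset_right hp, hpt, rfl⟩⟩

end CartanScheme


variable {I A : Type} [Fintype I] [DecidableEq I] [Fintype A] [Nonempty A] [DecidableEq A]

open CartanScheme


/-- If `u W_J(C) ∩ v W_K(C) ≠ ∅` then it equals `w W_{J∩K}(C)` for some
`w ∈ Hom(-,a)`; in particular if `J ⊆ K` then it equals `u W_J(C)`, and if `J = K` then
`u W_J(C) = v W_J(C)`. -/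
theorem coset_intersection (C : CartanScheme I A) (hC : C.IsFRS) (a : A)
    (J K : Set I) (u v : Mor C) (hu : u.tgt = a) (hv : v.tgt = a)
    (hne : (leftCoset u J ∩ leftCoset v K).Nonempty) :
    (∃ w : Mor C, w.tgt = a ∧
      leftCoset u J ∩ leftCoset v K = leftCoset w (J ∩ K)) ∧
    (J ⊆ K → leftCoset u J ∩ leftCoset v K = leftCoset u J) ∧
    (J = K → leftCoset u J = leftCoset v K) := by
  obtain ⟨z, hz1, hz2⟩ := hne
  have hzu : leftCoset z J = leftCoset u J := coset_eq_of_mem hz1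
  have hzv : leftCoset z K = leftCoset v K := coset_eq_of_mem hz2
  have hztgt : z.tgt = a := by
    obtain ⟨p, hp, hpt, rfl⟩ := hz1
    rw [comp_tgt hpt, hu]
  refine ⟨⟨z, hztgt, ?_⟩, ?_, ?_⟩
  · rw [← hzu, ← hzv]
    exact coset_inter_self hC z J K
  · intro hJK
    rw [← hzu, ← hzv, coset_inter_self hC z J K,
      Set.inter_eq_self_of_subset_left hJK]
  · intro hJK
    subst hJK
    rw [← hzu, ← hzv]
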